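/- arXiv:2201.01512 — 4 statements merged into one kernel-verified Lean document; each statement's English description precedes it below -/
import Mathlib

section
/- Let J : ℝ → ℝ be nonnegative and integrable with ∫_ℝ J(x) dx = 1, define ψ(t,x) := e^{−t} ∑_{i=1}^∞ (t^i/i!) · J^{*(i)}(x), and let u₀ ∈ L^∞(ℝ) be measurable and bounded. Define u(t,x) := e^{−t} u₀(x) + ∫_ℝ ψ(t,x−y) u₀(y) dy. Then u is a bounded solution of the linear nonlocal heat equation: u(0,x) = u₀(x) for all x, and for every x ∈ ℝ the map t ↦ u(t,x) is differentiable on (0,∞) with ∂_t u(t,x) = (J ∗ u(t,·))(x) − u(t,x) for all t > 0. -/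
open MeasureTheory Filter Set Asymptotics

noncomputable section

/-- `convIter J n` is the (n+1)-fold convolution `J^{*(n+1)}` of `J` with itself:
`convIter J 0 = J` and `convIter J (n+1) = J ∗ convIter J n`. -/
def convIter (J : ℝ → ℝ) : ℕ → ℝ → ℝ
  | 0 => J
  | n + 1 => fun x => ∫ y, J y * convIter J n (x - y)

/-- `tailR J n L = R_{n+1}(L) = ∫_{|x| ≥ L} J^{*(n+1)}(x) dx`, the tail of the
`(n+1)`-fold convolution of `J`. -/
def tailR (J : ℝ → ℝ) (n : ℕ) (L : ℝ) : ℝ :=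
  ∫ x in {x : ℝ | L ≤ |x|}, convIter J n x

/-- The step initial datum `φ(x) = h · 1_{(-L,L)}(x)`. -/
def stepInit (h L : ℝ) : ℝ → ℝ :=
  Set.indicator (Set.Ioo (-L) L) (fun _ => h)

/-- Assumption (K1): `J` is nonnegative, even, integrable, of total mass 1. -/
def K1 (J : ℝ → ℝ) : Prop :=
  (∀ x, 0 ≤ J x) ∧ (∀ x, J (-x) = J x) ∧ Integrable J ∧ (∫ x, J x) = 1

/-- `u` is a bounded solution of `∂ₜ u = ∫ J(y)(u(t,x-y) - u(t,x)) dy + f(u)` for `t > 0`,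
with initial datum `u0`. -/
def IsBddSol (J f : ℝ → ℝ) (u0 : ℝ → ℝ) (u : ℝ → ℝ → ℝ) : Prop :=
  (∃ M, ∀ t x, 0 ≤ t → |u t x| ≤ M) ∧
  (∀ t, 0 ≤ t → Measurable fun x => u t x) ∧
  (∀ x, ContinuousOn (fun t => u t x) (Set.Ici 0)) ∧
  (∀ x, u 0 x = u0 x) ∧
  (∀ t x, 0 < t → HasDerivAt (fun s => u s x)
    ((∫ y, J y * (u t (x - y) - u t x)) + f (u t x)) t)

/-- Extinction at large times: `sup_x u(t,x) → 0` as `t → ∞`. -/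
def Extinct (u : ℝ → ℝ → ℝ) : Prop :=
  Tendsto (fun t => ⨆ x, u t x) atTop (nhds 0)

/-- Propagation: `u(t,x) → 1` as `t → ∞`, locally uniformly in `x`. -/
def Propagates (u : ℝ → ℝ → ℝ) : Prop :=
  TendstoLocallyUniformly (fun t x => u t x) (fun _ => (1 : ℝ)) atTop

/-- Assumption (F): `f` is Lipschitz, vanishes at `0, θ, 1`, positive on `(θ,1)`,
bistable (with positive integral) or ignition, and `f(u) ≥ rm (u - θ)` on `[0, δ]`. -/
def AssumptionF (f : ℝ → ℝ) (θ rm δ : ℝ) : Prop :=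
  (∃ C : ℝ, 0 ≤ C ∧ ∀ u v : ℝ, |f u - f v| ≤ C * |u - v|) ∧
  f 0 = 0 ∧ f θ = 0 ∧ f 1 = 0 ∧
  (∀ u ∈ Set.Ioo θ 1, 0 < f u) ∧
  (((∀ u ∈ Set.Ioo 0 θ, f u < 0) ∧ 0 < ∫ s in (0:ℝ)..1, f s) ∨
    (∀ u ∈ Set.Ioo 0 θ, f u = 0)) ∧
  0 < rm ∧ δ ∈ Set.Ioo θ 1 ∧
  (∀ u ∈ Set.Icc 0 δ, rm * (u - θ) ≤ f u)

/-- Assumption (K3): the Fourier transform of `J` satisfies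
`Ĵ(ξ) = 1 - a |ξ|^β + o(|ξ|^β)` as `ξ → 0`. -/
def K3 (J : ℝ → ℝ) (a β : ℝ) : Prop :=
  (fun ξ : ℝ => (∫ x : ℝ, Complex.exp (-((ξ : ℂ) * (x : ℂ)) * Complex.I) * (J x : ℂ))
      - ((1 - a * |ξ| ^ β : ℝ) : ℂ))
    =o[nhds (0:ℝ)] (fun ξ : ℝ => |ξ| ^ β)

/-- `psiFun J t x = e^{-t} ∑_{i≥1} (tⁱ/i!) J^{*(i)}(x)`. -/
def psiFun (J : ℝ → ℝ) (t x : ℝ) : ℝ :=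
  Real.exp (-t) * ∑' n : ℕ, t ^ (n + 1) / (Nat.factorial (n + 1) : ℝ) * convIter J n x


open scoped Convolution

namespace LinAux

variable {J u0 : ℝ → ℝ} {M : ℝ}

lemma convIter_succ_eq (J : ℝ → ℝ) (n : ℕ) :
    convIter J (n + 1) = J ⋆[ContinuousLinearMap.mul ℝ ℝ] convIter J n := by
  funext x
  simp [convIter, convolution_def, ContinuousLinearMap.mul_apply']

lemma convIter_integrable (hJint : Integrable J) (n : ℕ) : Integrable (convIter J n) := by
  induction n with
  | zero => exact hJint
  | succ n ih =>
    rw [convIter_succ_eq]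
    exact hJint.integrable_convolution (ContinuousLinearMap.mul ℝ ℝ) ih

lemma convIter_nonneg (hJpos : ∀ x, 0 ≤ J x) (n : ℕ) : ∀ x, 0 ≤ convIter J n x := by
  induction n with
  | zero => exact hJpos
  | succ n ih =>
    intro x
    exact integral_nonneg fun y => mul_nonneg (hJpos y) (ih _)

lemma convIter_mass (hJint : Integrable J) (hJmass : (∫ x, J x) = 1) (n : ℕ) :
    (∫ x, convIter J n x) = 1 := by
  induction n with
  | zero => exact hJmass
  | succ n ih =>
    rw [convIter_succ_eq,
      integral_convolution (ContinuousLinearMap.mul ℝ ℝ) hJint (convIter_integrable hJint n),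
      hJmass, ih, ContinuousLinearMap.mul_apply', one_mul]

lemma conv_integrand_integrable {f g : ℝ → ℝ} (hf : Integrable f)
    (hg : AEStronglyMeasurable g volume) (hM : ∀ x, |g x| ≤ M) (x : ℝ) :
    Integrable fun y => f y * g (x - y) := by
  have hmeas : AEStronglyMeasurable (fun y => f y * g (x - y)) volume := by
    simpa [ContinuousLinearMap.mul_apply'] using
      hf.aestronglyMeasurable.convolution_integrand_snd (ContinuousLinearMap.mul ℝ ℝ) hg x
  refine (hf.norm.mul_const M).mono' hmeas ?_
  filter_upwards with y
  rw [norm_mul]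
  exact mul_le_mul_of_nonneg_left (by simpa [Real.norm_eq_abs] using hM (x - y)) (norm_nonneg _)

lemma conv_integral_norm_le {f g : ℝ → ℝ} (hfpos : ∀ x, 0 ≤ f x) (hf : Integrable f)
    (hf1 : (∫ x, f x) = 1) (hM : ∀ x, |g x| ≤ M) (x : ℝ) :
    (∫ y, ‖f y * g (x - y)‖) ≤ M := by
  have h1 : (∫ y, f y * M) = M := by rw [integral_mul_const, hf1, one_mul]
  rw [← h1]
  refine integral_mono_of_nonneg (Eventually.of_forall fun y => norm_nonneg _)
    (hf.mul_const M) (Eventually.of_forall fun y => ?_)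
  show ‖f y * g (x - y)‖ ≤ f y * M
  rw [norm_mul, Real.norm_eq_abs, Real.norm_eq_abs, abs_of_nonneg (hfpos y)]
  exact mul_le_mul_of_nonneg_left (hM _) (hfpos y)

lemma conv_abs_le {f g : ℝ → ℝ} (hfpos : ∀ x, 0 ≤ f x) (hf : Integrable f)
    (hf1 : (∫ x, f x) = 1) (hM : ∀ x, |g x| ≤ M) (x : ℝ) :
    |∫ y, f y * g (x - y)| ≤ M := by
  calc |∫ y, f y * g (x - y)| ≤ ∫ y, ‖f y * g (x - y)‖ := by
        rw [← Real.norm_eq_abs]; exact norm_integral_le_integral_norm _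
  _ ≤ M := conv_integral_norm_le hfpos hf hf1 hM x

def linV (J u0 : ℝ → ℝ) : ℕ → ℝ → ℝ
  | 0 => u0
  | n + 1 => fun x => ∫ y, J y * linV J u0 n (x - y)

lemma linV_meas (hJint : Integrable J) (hu0m : Measurable u0) (n : ℕ) :
    AEStronglyMeasurable (linV J u0 n) volume := by
  induction n with
  | zero => exact hu0m.aestronglyMeasurable
  | succ n ih =>
    have := (hJint.aestronglyMeasurable.convolution_integrand
      (ContinuousLinearMap.mul ℝ ℝ) ih).integral_prod_right'
    simpa [linV, ContinuousLinearMap.mul_apply'] using this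

lemma linV_bound (hJpos : ∀ x, 0 ≤ J x) (hJint : Integrable J) (hJmass : (∫ x, J x) = 1)
    (hM : ∀ x, |u0 x| ≤ M) (n : ℕ) : ∀ x, |linV J u0 n x| ≤ M := by
  induction n with
  | zero => exact hM
  | succ n ih => exact fun x => conv_abs_le hJpos hJint hJmass ih x

end LinAux

namespace LinAux

variable {J u0 : ℝ → ℝ} {M : ℝ}

lemma abs_norm_le {g : ℝ → ℝ} (hM : ∀ x, |g x| ≤ M) : ∀ x, |‖g x‖| ≤ M := by
  intro x; simpa [Real.norm_eq_abs, abs_abs] using hM x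

lemma integral_norm_convIter (hJpos : ∀ x, 0 ≤ J x) (hJint : Integrable J)
    (hJmass : (∫ x, J x) = 1) (n : ℕ) :
    (∫ x, ‖convIter J n x‖) = 1 := by
  rw [← convIter_mass hJint hJmass n]
  exact integral_congr_ae (Eventually.of_forall fun x => by
    simp [Real.norm_eq_abs, abs_of_nonneg (convIter_nonneg hJpos n x)])

lemma linV_eq_conv (hJpos : ∀ x, 0 ≤ J x) (hJint : Integrable J) (hJmass : (∫ x, J x) = 1)
    (hu0m : Measurable u0) (hM : ∀ x, |u0 x| ≤ M) (n : ℕ) (x : ℝ) :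
    (∫ y, convIter J n y * u0 (x - y)) = linV J u0 (n + 1) x := by
  induction n generalizing x with
  | zero => rfl
  | succ n ih =>
    have hCn := convIter_integrable hJint n
    set L := ContinuousLinearMap.mul ℝ ℝ with hL
    have hQmeas : AEStronglyMeasurable
        ((fun z => ‖convIter J n z‖) ⋆[L] fun z => ‖u0 z‖) volume := by
      have := (MeasureTheory.AEStronglyMeasurable.convolution_integrand (μ := volume)
        (ν := volume) L hCn.norm.aestronglyMeasurable
        hu0m.norm.aestronglyMeasurable).integral_prod_right'
      exact this
    have hQbound : ∀ z, |((fun z => ‖convIter J n z‖) ⋆[L] fun z => ‖u0 z‖) z| ≤ M := by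
      intro z
      have : ((fun z => ‖convIter J n z‖) ⋆[L] fun z => ‖u0 z‖) z
          = ∫ y, ‖convIter J n y‖ * ‖u0 (z - y)‖ := by
        simp [convolution_def, hL, ContinuousLinearMap.mul_apply']
      rw [this]
      have h1 : (∫ y, ‖convIter J n y‖) = 1 := integral_norm_convIter hJpos hJint hJmass n
      exact conv_abs_le (fun y => norm_nonneg _) hCn.norm h1 (abs_norm_le hM) z
    have key : ((J ⋆[L] convIter J n) ⋆[L] u0) x = (J ⋆[L] (convIter J n ⋆[L] u0)) x := by
      apply convolution_assoc L L L L
      · intro a b c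
        simp [hL, ContinuousLinearMap.mul_apply', mul_assoc]
      · exact hJint.aestronglyMeasurable
      · exact hCn.aestronglyMeasurable
      · exact hu0m.aestronglyMeasurable
      · exact MeasureTheory.Integrable.ae_convolution_exists (μ := volume) (ν := volume) L hJint hCn
      · refine Eventually.of_forall fun z => ?_
        have := conv_integrand_integrable hCn.norm hu0m.norm.aestronglyMeasurable
          (abs_norm_le hM) z
        simpa [ConvolutionExistsAt, hL, ContinuousLinearMap.mul_apply'] using this
      · have := conv_integrand_integrable hJint.norm hQmeas hQbound x
        simpa [ConvolutionExistsAt, hL, ContinuousLinearMap.mul_apply'] using this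
    have lhs_eq : (∫ y, convIter J (n + 1) y * u0 (x - y))
        = ((J ⋆[L] convIter J n) ⋆[L] u0) x := by
      rw [← convIter_succ_eq]
      simp [convolution_def, hL, ContinuousLinearMap.mul_apply']
    rw [lhs_eq, key]
    have rhs_eq : (J ⋆[L] (convIter J n ⋆[L] u0)) x
        = ∫ z, J z * linV J u0 (n + 1) (x - z) := by
      simp only [convolution_def, hL, ContinuousLinearMap.mul_apply']
      refine integral_congr_ae (Eventually.of_forall fun z => ?_)
      show J z * (∫ y, convIter J n y * u0 (x - z - y)) = J z * linV J u0 (n + 1) (x - z)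
      rw [← ih (x - z)]
    rw [rhs_eq]
    rfl

end LinAux

namespace LinAux

variable {J u0 : ℝ → ℝ} {M : ℝ}

lemma summable_linV (hJpos : ∀ x, 0 ≤ J x) (hJint : Integrable J) (hJmass : (∫ x, J x) = 1)
    (hM : ∀ x, |u0 x| ≤ M) (t x : ℝ) :
    Summable fun k : ℕ => t ^ k / (Nat.factorial k : ℝ) * linV J u0 k x := by
  refine Summable.of_norm_bounded
    ((Real.summable_pow_div_factorial |t|).mul_right M) fun k => ?_
  rw [norm_mul, Real.norm_eq_abs, Real.norm_eq_abs, abs_div, abs_pow, Nat.abs_cast]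
  exact mul_le_mul_of_nonneg_left (linV_bound hJpos hJint hJmass hM k x) (by positivity)

lemma key_swap (a : ℕ → ℝ) (p q : ℕ → ℝ → ℝ)
    (hpp : ∀ k x, 0 ≤ p k x) (hpi : ∀ k, Integrable (p k)) (hpm : ∀ k, (∫ x, p k x) = 1)
    (hq : ∀ k, AEStronglyMeasurable (q k) volume) (hqb : ∀ k x, |q k x| ≤ M)
    (ha : Summable fun k => |a k|) (x : ℝ) :
    (∫ y, ∑' k : ℕ, a k * (p k y * q k (x - y)))
      = ∑' k : ℕ, a k * ∫ y, p k y * q k (x - y) := by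
  have hint : ∀ k, Integrable fun y => a k * (p k y * q k (x - y)) := fun k =>
    (conv_integrand_integrable (hpi k) (hq k) (hqb k) x).const_mul _
  have hnorm : ∀ k, (∫ y, ‖a k * (p k y * q k (x - y))‖) ≤ |a k| * M := by
    intro k
    have h1 : (∫ y, ‖a k * (p k y * q k (x - y))‖)
        = |a k| * ∫ y, ‖p k y * q k (x - y)‖ := by
      rw [← integral_const_mul]
      exact integral_congr_ae (Eventually.of_forall fun y => by
        show ‖a k * (p k y * q k (x - y))‖ = |a k| * ‖p k y * q k (x - y)‖
        rw [norm_mul, Real.norm_eq_abs])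
    rw [h1]
    exact mul_le_mul_of_nonneg_left
      (conv_integral_norm_le (hpp k) (hpi k) (hpm k) (hqb k) x) (abs_nonneg _)
  have hsum : Summable fun k => ∫ y, ‖a k * (p k y * q k (x - y))‖ :=
    Summable.of_nonneg_of_le (fun k => integral_nonneg fun y => norm_nonneg _) hnorm
      (ha.mul_right M)
  rw [← integral_tsum_of_summable_integral_norm hint hsum]
  exact tsum_congr fun k => integral_const_mul _ _

lemma u_repr (hJpos : ∀ x, 0 ≤ J x) (hJint : Integrable J) (hJmass : (∫ x, J x) = 1)
    (hu0m : Measurable u0) (hM : ∀ x, |u0 x| ≤ M) (t x : ℝ) :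
    Real.exp (-t) * u0 x + (∫ y, psiFun J t (x - y) * u0 y)
      = Real.exp (-t) * ∑' k : ℕ, t ^ k / (Nat.factorial k : ℝ) * linV J u0 k x := by
  have hstep1 : (∫ y, psiFun J t (x - y) * u0 y) = ∫ y, psiFun J t y * u0 (x - y) := by
    have h := MeasureTheory.integral_sub_left_eq_self
      (fun y => psiFun J t y * u0 (x - y)) volume x
    simp only [sub_sub_cancel] at h
    exact h
  have hpt : ∀ y, psiFun J t y * u0 (x - y)
      = ∑' n : ℕ, (Real.exp (-t) * (t ^ (n + 1) / (Nat.factorial (n + 1) : ℝ)))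
          * (convIter J n y * u0 (x - y)) := by
    intro y
    rw [psiFun, ← tsum_mul_left, ← tsum_mul_right]
    exact tsum_congr fun n => by ring
  have hasum : Summable fun n : ℕ =>
      |Real.exp (-t) * (t ^ (n + 1) / (Nat.factorial (n + 1) : ℝ))| := by
    have hs : Summable fun n : ℕ => |t| ^ (n + 1) / (Nat.factorial (n + 1) : ℝ) :=
      (Real.summable_pow_div_factorial |t|).comp_injective Nat.succ_injective
    refine (hs.mul_left (Real.exp (-t))).congr fun n => ?_
    rw [abs_mul, abs_of_pos (Real.exp_pos _), abs_div, abs_pow, Nat.abs_cast]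
  have hswap := key_swap (fun n => Real.exp (-t) * (t ^ (n + 1) / (Nat.factorial (n + 1) : ℝ)))
    (fun n => convIter J n) (fun _ => u0) (fun n => convIter_nonneg hJpos n)
    (fun n => convIter_integrable hJint n) (fun n => convIter_mass hJint hJmass n)
    (fun _ => hu0m.aestronglyMeasurable) (fun _ => hM) hasum x
  have hint : (∫ y, psiFun J t y * u0 (x - y))
      = ∑' n : ℕ, (Real.exp (-t) * (t ^ (n + 1) / (Nat.factorial (n + 1) : ℝ)))
          * linV J u0 (n + 1) x := by
    rw [show (fun y => psiFun J t y * u0 (x - y))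
        = fun y => ∑' n : ℕ, (Real.exp (-t) * (t ^ (n + 1) / (Nat.factorial (n + 1) : ℝ)))
          * (convIter J n y * u0 (x - y)) from funext hpt]
    rw [hswap]
    exact tsum_congr fun n => by
      rw [linV_eq_conv hJpos hJint hJmass hu0m hM n x]
  rw [hstep1, hint, Summable.tsum_eq_zero_add (summable_linV hJpos hJint hJmass hM t x)]
  have h0 : t ^ 0 / (Nat.factorial 0 : ℝ) * linV J u0 0 x = u0 x := by
    simp [linV]
  rw [h0, mul_add]
  congr 1
  rw [← tsum_mul_left]
  exact tsum_congr fun n => by ring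

end LinAux

/-- For `J` nonnegative, integrable of mass 1, and `u₀` measurable and bounded, the function
`u(t,x) = e^{-t} u₀(x) + ∫ ψ(t,x-y) u₀(y) dy` is a bounded solution of the linear nonlocal heat
equation: `u(0,·) = u₀`, `u` is bounded on `[0,∞) × ℝ`, and for every `x` the map `t ↦ u(t,x)`
is differentiable on `(0,∞)` with `∂ₜ u(t,x) = (J ∗ u(t,·))(x) - u(t,x)`. -/
theorem linear_solution_formula
    (J u0 : ℝ → ℝ) (u : ℝ → ℝ → ℝ)
    (hJpos : ∀ x, 0 ≤ J x) (hJint : Integrable J) (hJmass : (∫ x, J x) = 1)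
    (hu0m : Measurable u0) (hu0b : ∃ M, ∀ x, |u0 x| ≤ M)
    (hu : u = fun t x => Real.exp (-t) * u0 x + ∫ y, psiFun J t (x - y) * u0 y) :
    (∀ x, u 0 x = u0 x) ∧
    (∃ M, ∀ t x, 0 ≤ t → |u t x| ≤ M) ∧
    (∀ x, ∀ t, 0 < t → HasDerivAt (fun s => u s x)
      ((∫ y, J y * u t (x - y)) - u t x) t) := by
  obtain ⟨M, hM⟩ := hu0b
  have hM0 : 0 ≤ M := le_trans (abs_nonneg _) (hM 0)
  have hrepr : ∀ t x, u t x
      = Real.exp (-t) * ∑' k : ℕ, t ^ k / (Nat.factorial k : ℝ) * LinAux.linV J u0 k x := by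
    intro t x
    rw [hu]
    exact LinAux.u_repr hJpos hJint hJmass hu0m hM t x
  refine ⟨?_, ⟨M, ?_⟩, ?_⟩
  · -- initial datum
    intro x
    have hpsi0 : ∀ z, psiFun J 0 z = 0 := by
      intro z
      rw [psiFun]
      have h : ∀ n : ℕ, (0:ℝ) ^ (n + 1) / (Nat.factorial (n + 1) : ℝ) * convIter J n z
          = 0 := by
        intro n
        rw [zero_pow (Nat.succ_ne_zero n)]
        simp
      rw [tsum_congr h, tsum_zero, mul_zero]
    rw [hu]
    simp [hpsi0]
  · -- boundedness
    intro t x ht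
    rw [hrepr]
    have hsn : Summable fun k : ℕ =>
        ‖t ^ k / (Nat.factorial k : ℝ) * LinAux.linV J u0 k x‖ := by
      refine Summable.of_nonneg_of_le (fun k => norm_nonneg _) (fun k => ?_)
        ((Real.summable_pow_div_factorial |t|).mul_right M)
      rw [norm_mul, Real.norm_eq_abs, Real.norm_eq_abs, abs_div, abs_pow, Nat.abs_cast]
      exact mul_le_mul_of_nonneg_left
        (LinAux.linV_bound hJpos hJint hJmass hM k x) (by positivity)
    calc |Real.exp (-t) * ∑' k : ℕ, t ^ k / (Nat.factorial k : ℝ) * LinAux.linV J u0 k x|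
        = Real.exp (-t) * |∑' k : ℕ, t ^ k / (Nat.factorial k : ℝ) * LinAux.linV J u0 k x| := by
          rw [abs_mul, abs_of_pos (Real.exp_pos _)]
      _ ≤ Real.exp (-t) * (Real.exp t * M) := by
          refine mul_le_mul_of_nonneg_left ?_ (Real.exp_pos _).le
          calc |∑' k : ℕ, t ^ k / (Nat.factorial k : ℝ) * LinAux.linV J u0 k x|
              ≤ ∑' k : ℕ, ‖t ^ k / (Nat.factorial k : ℝ) * LinAux.linV J u0 k x‖ := by
                rw [← Real.norm_eq_abs]
                exact norm_tsum_le_tsum_norm hsn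
            _ ≤ ∑' k : ℕ, t ^ k / (Nat.factorial k : ℝ) * M := by
                refine Summable.tsum_le_tsum (fun k => ?_) hsn
                  ((Real.summable_pow_div_factorial t).mul_right M)
                rw [norm_mul, Real.norm_eq_abs, Real.norm_eq_abs, abs_div, abs_pow,
                  Nat.abs_cast, abs_of_nonneg ht]
                exact mul_le_mul_of_nonneg_left
                  (LinAux.linV_bound hJpos hJint hJmass hM k x) (by positivity)
            _ = Real.exp t * M := by
                rw [tsum_mul_right, Real.exp_eq_exp_ℝ, NormedSpace.exp_eq_tsum_div]
      _ = M := by rw [← mul_assoc, ← Real.exp_add, neg_add_cancel, Real.exp_zero, one_mul]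
  · -- derivative
    intro x t ht
    have hT : (0:ℝ) < t + 1 := by linarith
    have hmem : t ∈ Set.Ioo (-(t+1)) (t+1) := ⟨by linarith, by linarith⟩
    -- summable bound for the derivatives
    have hb : Summable (fun k : ℕ => (k:ℝ) * (t+1) ^ (k-1) / (Nat.factorial k : ℝ) * M) := by
      apply (summable_nat_add_iff 1).mp
      refine ((Real.summable_pow_div_factorial (t+1)).mul_right M).congr fun n => ?_
      have hfe : (Nat.factorial (n+1) : ℝ) = ((n:ℝ)+1) * (Nat.factorial n : ℝ) := by
        rw [Nat.factorial_succ]; push_cast; ring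
      have hne : (Nat.factorial n : ℝ) ≠ 0 := by
        exact_mod_cast (Nat.factorial_ne_zero n)
      have hne2 : ((n:ℝ)+1) ≠ 0 := by positivity
      show (t+1) ^ n / (Nat.factorial n : ℝ) * M
          = ((n+1 : ℕ):ℝ) * (t+1) ^ ((n+1)-1) / (Nat.factorial (n+1) : ℝ) * M
      rw [Nat.add_sub_cancel, hfe]
      push_cast
      field_simp
    have hderiv : ∀ (k : ℕ) (s : ℝ), s ∈ Set.Ioo (-(t+1)) (t+1) →
        HasDerivAt (fun s : ℝ => s ^ k / (Nat.factorial k : ℝ) * LinAux.linV J u0 k x)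
          ((k:ℝ) * s ^ (k-1) / (Nat.factorial k : ℝ) * LinAux.linV J u0 k x) s := by
      intro k s _
      exact ((hasDerivAt_pow k s).div_const (Nat.factorial k : ℝ)).mul_const _
    have hbound : ∀ (k : ℕ) (s : ℝ), s ∈ Set.Ioo (-(t+1)) (t+1) →
        ‖(k:ℝ) * s ^ (k-1) / (Nat.factorial k : ℝ) * LinAux.linV J u0 k x‖
          ≤ (k:ℝ) * (t+1) ^ (k-1) / (Nat.factorial k : ℝ) * M := by
      intro k s hs
      have hsT : |s| ≤ t + 1 := abs_le.mpr ⟨hs.1.le, hs.2.le⟩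
      rw [Real.norm_eq_abs, abs_mul, abs_div, abs_mul, abs_pow, Nat.abs_cast, Nat.abs_cast]
      gcongr
      exact LinAux.linV_bound hJpos hJint hJmass hM k x
    have hG : HasDerivAt
        (fun s : ℝ => ∑' k : ℕ, s ^ k / (Nat.factorial k : ℝ) * LinAux.linV J u0 k x)
        (∑' k : ℕ, (k:ℝ) * t ^ (k-1) / (Nat.factorial k : ℝ) * LinAux.linV J u0 k x) t :=
      hasDerivAt_tsum_of_isPreconnected hb isOpen_Ioo (convex_Ioo _ _).isPreconnected
        hderiv hbound hmem (LinAux.summable_linV hJpos hJint hJmass hM t x) hmem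
    have hexp : HasDerivAt (fun s : ℝ => Real.exp (-s)) (-Real.exp (-t)) t := by
      simpa [Function.comp_def] using (Real.hasDerivAt_exp (-t)).comp t (hasDerivAt_neg t)
    have hU := hexp.mul hG
    have hfun : (fun s => u s x)
        = fun s => Real.exp (-s)
            * ∑' k : ℕ, s ^ k / (Nat.factorial k : ℝ) * LinAux.linV J u0 k x :=
      funext fun s => hrepr s x
    rw [hfun]
    -- compute the claimed derivative value
    have hg'summ : Summable fun k : ℕ =>
        (k:ℝ) * t ^ (k-1) / (Nat.factorial k : ℝ) * LinAux.linV J u0 k x :=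
      Summable.of_norm_bounded hb fun k => hbound k t hmem
    have hDshift : (∑' k : ℕ, (k:ℝ) * t ^ (k-1) / (Nat.factorial k : ℝ) * LinAux.linV J u0 k x)
        = ∑' k : ℕ, t ^ k / (Nat.factorial k : ℝ) * LinAux.linV J u0 (k+1) x := by
      rw [Summable.tsum_eq_zero_add hg'summ]
      have h0 : ((0:ℕ):ℝ) * t ^ (0-1) / (Nat.factorial 0 : ℝ) * LinAux.linV J u0 0 x = 0 := by
        simp
      rw [h0, zero_add]
      refine tsum_congr fun k => ?_
      have hfe : (Nat.factorial (k+1) : ℝ) = ((k:ℝ)+1) * (Nat.factorial k : ℝ) := by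
        rw [Nat.factorial_succ]; push_cast; ring
      have hne : (Nat.factorial k : ℝ) ≠ 0 := by
        exact_mod_cast (Nat.factorial_ne_zero k)
      have hne2 : ((k:ℝ)+1) ≠ 0 := by positivity
      rw [Nat.add_sub_cancel, hfe]
      push_cast
      field_simp
    have hasum : Summable fun k : ℕ =>
        |Real.exp (-t) * (t ^ k / (Nat.factorial k : ℝ))| := by
      refine ((Real.summable_pow_div_factorial |t|).mul_left (Real.exp (-t))).congr fun k => ?_
      rw [abs_mul, abs_of_pos (Real.exp_pos _), abs_div, abs_pow, Nat.abs_cast]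
    have hJu : (∫ y, J y * u t (x - y))
        = Real.exp (-t) * ∑' k : ℕ, t ^ k / (Nat.factorial k : ℝ) * LinAux.linV J u0 (k+1) x := by
      have hpt : ∀ y, J y * u t (x - y)
          = ∑' k : ℕ, (Real.exp (-t) * (t ^ k / (Nat.factorial k : ℝ)))
              * (J y * LinAux.linV J u0 k (x - y)) := by
        intro y
        rw [hrepr t (x - y), ← tsum_mul_left, ← tsum_mul_left]
        exact tsum_congr fun k => by ring
      have hswap := LinAux.key_swap
        (fun k => Real.exp (-t) * (t ^ k / (Nat.factorial k : ℝ)))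
        (fun _ => J) (fun k => LinAux.linV J u0 k) (fun _ => hJpos) (fun _ => hJint)
        (fun _ => hJmass) (fun k => LinAux.linV_meas hJint hu0m k)
        (fun k => LinAux.linV_bound hJpos hJint hJmass hM k) hasum x
      rw [show (fun y => J y * u t (x - y))
          = fun y => ∑' k : ℕ, (Real.exp (-t) * (t ^ k / (Nat.factorial k : ℝ)))
              * (J y * LinAux.linV J u0 k (x - y)) from funext hpt]
      rw [hswap]
      have hval : ∀ k : ℕ, (∫ y, J y * LinAux.linV J u0 k (x - y))
          = LinAux.linV J u0 (k+1) x := fun k => rfl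
      rw [← tsum_mul_left]
      exact tsum_congr fun k => by rw [hval k]; ring
    have hvaleq : (∫ y, J y * u t (x - y))
          - u t x
        = -Real.exp (-t)
            * (∑' k : ℕ, t ^ k / (Nat.factorial k : ℝ) * LinAux.linV J u0 k x)
          + Real.exp (-t)
            * ∑' k : ℕ, (k:ℝ) * t ^ (k-1) / (Nat.factorial k : ℝ) * LinAux.linV J u0 k x := by
      rw [hJu, hrepr t x, hDshift]
      ring
    rw [hvaleq]
    exact hU
end
end

section
/- Let J satisfy (K1) and (K2), fix r⁺ > 0 and θ ∈ (0,1), and assume J is exponentially bounded: there exists λ₀ > 0 with ∫_ℝ e^{λ₀ x} J(x) dx < ∞. Then there exist constants C⁻ > 0 and C̃⁻ > 0 (depending only on r⁺ and J) and ε₀ > 0 such that for each ε ∈ (0, ε₀) and each L with 0 < L < C⁻·ln(1/ε), the solution w of the semilinear toy problem ∂_t w = J ∗ w − w + r⁺·max(w − θ, 0) with initial datum w(0,x) = (θ+ε)·1_{(−L,L)}(x) satisfies sup_{x∈ℝ} w(T,x) ≤ θ at the time T = C̃⁻·ln(1/ε). -/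
open MeasureTheory Filter Set Asymptotics

noncomputable section

open Nat Topology

namespace TEaux

/-- FTC-1 helper. -/
lemma ftc1 {g : ℝ → ℝ} (hg : Continuous g) (τ : ℝ) :
    HasDerivAt (fun u => ∫ s in (0:ℝ)..u, g s) (g τ) τ :=
  intervalIntegral.integral_hasDerivAt_right (hg.intervalIntegrable 0 τ)
    hg.stronglyMeasurable.stronglyMeasurableAtFilter hg.continuousAt

/-- exponential-type series -/
def ES (c : ℕ → ℝ) (t : ℝ) : ℝ := ∑' n, c n * t ^ n / n !

lemma exp_tsum (t : ℝ) : Real.exp t = ∑' n, t ^ n / (n ! : ℝ) := by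
  rw [Real.exp_eq_exp_ℝ, NormedSpace.exp_eq_tsum_div]

lemma ES_summable {c : ℕ → ℝ} (h1 : ∀ n, |c n| ≤ 1) (t : ℝ) :
    Summable (fun n => c n * t ^ n / n !) := by
  apply Summable.of_norm
  refine Summable.of_nonneg_of_le (fun n => norm_nonneg _) ?_
    (Real.summable_pow_div_factorial |t|)
  intro n
  rw [Real.norm_eq_abs, abs_div, abs_mul, abs_pow, Nat.abs_cast]
  have h2 : |c n| * |t| ^ n ≤ 1 * |t| ^ n :=
    mul_le_mul_of_nonneg_right (h1 n) (by positivity)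
  rw [one_mul] at h2
  exact div_le_div_of_nonneg_right h2 (by positivity) |>.trans_eq rfl

lemma ES_nonneg {c : ℕ → ℝ} (h0 : ∀ n, 0 ≤ c n) {t : ℝ} (ht : 0 ≤ t) :
    0 ≤ ES c t :=
  tsum_nonneg fun n => div_nonneg (mul_nonneg (h0 n) (pow_nonneg ht n)) (by positivity)

lemma ES_le_exp {c : ℕ → ℝ} (h0 : ∀ n, 0 ≤ c n) (h1 : ∀ n, c n ≤ 1) {t : ℝ} (ht : 0 ≤ t) :
    ES c t ≤ Real.exp t := by
  rw [exp_tsum]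
  refine Summable.tsum_le_tsum (fun n => ?_)
    (ES_summable (fun n => abs_le.mpr ⟨by linarith [h0 n], h1 n⟩) t)
    (Real.summable_pow_div_factorial t)
  have : c n * t ^ n ≤ 1 * t ^ n := mul_le_mul_of_nonneg_right (h1 n) (pow_nonneg ht n)
  rw [one_mul] at this
  exact div_le_div_of_nonneg_right this (by positivity) |>.trans_eq rfl

lemma ES_continuousOn {c : ℕ → ℝ} (h1 : ∀ n, |c n| ≤ 1) (R : ℝ) :
    ContinuousOn (ES c) (Icc 0 R) := by
  set R' := max R 0 with hR'
  have hR'0 : 0 ≤ R' := le_max_right _ _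
  have hcont : Continuous fun t : ℝ => ∑' n, c n * (min |t| R') ^ n / n ! := by
    apply continuous_tsum (u := fun n => R' ^ n / n !)
    · intro n
      exact ((continuous_const.mul (((continuous_abs).min continuous_const).pow n)).div_const _)
    · exact Real.summable_pow_div_factorial R'
    · intro n t
      have hm0 : 0 ≤ min |t| R' := le_min (abs_nonneg t) hR'0
      rw [Real.norm_eq_abs, abs_div, abs_mul, abs_pow, Nat.abs_cast, abs_of_nonneg hm0]
      have h2 : |c n| * min |t| R' ^ n ≤ 1 * R' ^ n := by
        apply mul_le_mul (h1 n) (pow_le_pow_left₀ hm0 (min_le_right _ _) n) (by positivity)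
          zero_le_one
      rw [one_mul] at h2
      exact div_le_div_of_nonneg_right h2 (by positivity)
  apply hcont.continuousOn.congr
  intro t ht
  have : min |t| R' = t := by
    rw [abs_of_nonneg ht.1]
    exact min_eq_left (le_trans ht.2 (le_max_left _ _))
  simp only [ES]
  rw [this]

/-- iterated averaging of the step against the kernel -/
def bb (Jm : ℝ → ℝ) (L : ℝ) : ℕ → ℝ → ℝ
  | 0 => Set.indicator (Set.Ioo (-L) L) fun _ => (1:ℝ)
  | n + 1 => fun x => ∫ y, Jm y * bb Jm L n (x - y)

section bbsec

variable {Jm : ℝ → ℝ} {L : ℝ}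

lemma bb_meas (hJme : Measurable Jm) : ∀ n, Measurable (bb Jm L n) := by
  intro n
  induction n with
  | zero => exact measurable_const.indicator measurableSet_Ioo
  | succ n ih =>
    have h : StronglyMeasurable fun p : ℝ × ℝ => Jm p.2 * bb Jm L n (p.1 - p.2) :=
      ((hJme.comp measurable_snd).mul
        (ih.comp (measurable_fst.sub measurable_snd))).stronglyMeasurable
    exact h.integral_prod_right'.measurable

lemma bb_nonneg (hJnn : ∀ y, 0 ≤ Jm y) : ∀ n x, 0 ≤ bb Jm L n x := by
  intro n
  induction n with
  | zero => intro x; exact Set.indicator_nonneg (fun _ _ => zero_le_one) x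
  | succ n ih =>
    intro x
    exact integral_nonneg fun y => mul_nonneg (hJnn y) (ih _)

lemma bb_le_one (hJme : Measurable Jm) (hJnn : ∀ y, 0 ≤ Jm y) (hJint : Integrable Jm)
    (hJmass : (∫ y, Jm y) = 1) : ∀ n x, bb Jm L n x ≤ 1 := by
  intro n
  induction n with
  | zero =>
    intro x
    by_cases hx : x ∈ Set.Ioo (-L) L <;> simp [bb, hx]
  | succ n ih =>
    intro x
    have hInt : Integrable fun y => Jm y * bb Jm L n (x - y) := by
      refine hJint.mono' ?_ ?_
      · exact (hJme.mul ((bb_meas hJme n).comp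
          (measurable_const.sub measurable_id))).aestronglyMeasurable
      · filter_upwards with y
        rw [Real.norm_eq_abs, abs_mul, abs_of_nonneg (hJnn y),
          abs_of_nonneg (bb_nonneg hJnn n _)]
        exact mul_le_of_le_one_right (hJnn y) (ih _)
    calc (∫ y, Jm y * bb Jm L n (x - y)) ≤ ∫ y, Jm y :=
          integral_mono hInt hJint fun y => mul_le_of_le_one_right (hJnn y) (ih _)
      _ = 1 := hJmass

lemma bb_integrable (hJme : Measurable Jm) (hJnn : ∀ y, 0 ≤ Jm y) (hJint : Integrable Jm)
    (hJmass : (∫ y, Jm y) = 1) (n : ℕ) (x : ℝ) :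
    Integrable fun y => Jm y * bb Jm L n (x - y) := by
  refine hJint.mono' ?_ ?_
  · exact (hJme.mul ((bb_meas hJme n).comp
      (measurable_const.sub measurable_id))).aestronglyMeasurable
  · filter_upwards with y
    rw [Real.norm_eq_abs, abs_mul, abs_of_nonneg (hJnn y),
      abs_of_nonneg (bb_nonneg hJnn n _)]
    exact mul_le_of_le_one_right (hJnn y) (bb_le_one hJme hJnn hJint hJmass n _)

lemma bb_tail_right (hJme : Measurable Jm) (hJnn : ∀ y, 0 ≤ Jm y) (hJint : Integrable Jm)
    (hJmass : (∫ y, Jm y) = 1) {s p : ℝ}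
    (hp : p = ∫ y in Ici s, Jm y) (hp0 : 0 ≤ p) :
    ∀ (n : ℕ) (x : ℝ), x ≤ (n : ℝ) * s - L → bb Jm L n x ≤ 1 - p ^ n := by
  intro n
  induction n with
  | zero =>
    intro x hx
    simp only [Nat.cast_zero, zero_mul, zero_sub] at hx
    have : x ∉ Set.Ioo (-L) L := fun h => absurd h.1 (not_lt.mpr hx)
    simp [bb, Set.indicator_of_notMem this]
  | succ n ih =>
    intro x hx
    have key : ∀ y, Jm y * bb Jm L n (x - y) ≤ Jm y - p ^ n * Set.indicator (Ici s) Jm y := by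
      intro y
      by_cases hy : s ≤ y
      · rw [Set.indicator_of_mem (Set.mem_Ici.mpr hy) Jm]
        have hxy : x - y ≤ (n : ℝ) * s - L := by
          push_cast at hx ⊢
          linarith
        have h1 : bb Jm L n (x - y) ≤ 1 - p ^ n := ih _ hxy
        nlinarith [hJnn y, pow_nonneg hp0 n]
      · rw [Set.indicator_of_notMem (by simpa using hy)]
        have := bb_le_one (L := L) hJme hJnn hJint hJmass n (x - y)
        nlinarith [hJnn y]
    have hIint : Integrable fun y => Jm y - p ^ n * Set.indicator (Ici s) Jm y :=
      hJint.sub ((hJint.indicator measurableSet_Ici).const_mul _)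
    calc bb Jm L (n+1) x = ∫ y, Jm y * bb Jm L n (x - y) := rfl
      _ ≤ ∫ y, (Jm y - p ^ n * Set.indicator (Ici s) Jm y) :=
          integral_mono (bb_integrable hJme hJnn hJint hJmass n x) hIint key
      _ = (∫ y, Jm y) - p ^ n * ∫ y, Set.indicator (Ici s) Jm y := by
          rw [integral_sub hJint ((hJint.indicator measurableSet_Ici).const_mul _),
            integral_const_mul]
      _ = 1 - p ^ n * p := by
          rw [hJmass, integral_indicator measurableSet_Ici, ← hp]
      _ = 1 - p ^ (n+1) := by ring

lemma bb_tail_left (hJme : Measurable Jm) (hJnn : ∀ y, 0 ≤ Jm y) (hJint : Integrable Jm)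
    (hJmass : (∫ y, Jm y) = 1) {s q : ℝ}
    (hq : q = ∫ y in Iic (-s), Jm y) (hq0 : 0 ≤ q) :
    ∀ (n : ℕ) (x : ℝ), L - (n : ℝ) * s ≤ x → bb Jm L n x ≤ 1 - q ^ n := by
  intro n
  induction n with
  | zero =>
    intro x hx
    simp only [Nat.cast_zero, zero_mul, sub_zero] at hx
    have : x ∉ Set.Ioo (-L) L := fun h => absurd h.2 (not_lt.mpr hx)
    simp [bb, Set.indicator_of_notMem this]
  | succ n ih =>
    intro x hx
    have key : ∀ y, Jm y * bb Jm L n (x - y) ≤ Jm y - q ^ n * Set.indicator (Iic (-s)) Jm y := by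
      intro y
      by_cases hy : y ≤ -s
      · rw [Set.indicator_of_mem (Set.mem_Iic.mpr hy) Jm]
        have hxy : L - (n : ℝ) * s ≤ x - y := by
          push_cast at hx ⊢
          linarith
        have h1 : bb Jm L n (x - y) ≤ 1 - q ^ n := ih _ hxy
        nlinarith [hJnn y, pow_nonneg hq0 n]
      · rw [Set.indicator_of_notMem (by simpa using hy)]
        have := bb_le_one (L := L) hJme hJnn hJint hJmass n (x - y)
        nlinarith [hJnn y]
    have hIint : Integrable fun y => Jm y - q ^ n * Set.indicator (Iic (-s)) Jm y :=
      hJint.sub ((hJint.indicator measurableSet_Iic).const_mul _)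
    calc bb Jm L (n+1) x = ∫ y, Jm y * bb Jm L n (x - y) := rfl
      _ ≤ ∫ y, (Jm y - q ^ n * Set.indicator (Iic (-s)) Jm y) :=
          integral_mono (bb_integrable hJme hJnn hJint hJmass n x) hIint key
      _ = (∫ y, Jm y) - q ^ n * ∫ y, Set.indicator (Iic (-s)) Jm y := by
          rw [integral_sub hJint ((hJint.indicator measurableSet_Iic).const_mul _),
            integral_const_mul]
      _ = 1 - q ^ n * q := by
          rw [hJmass, integral_indicator measurableSet_Iic, ← hq]
      _ = 1 - q ^ (n+1) := by ring

end bbsec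
section GGsec

variable {Jm : ℝ → ℝ} {L : ℝ}

/-- Solution of the linear equation `∂ₜ G = J ∗ G` (before the `e^{-t}` weight). -/
def GG (Jm : ℝ → ℝ) (L : ℝ) (t x : ℝ) : ℝ := ES (fun n => bb Jm L n x) t

lemma bb_abs_le (hJme : Measurable Jm) (hJnn : ∀ y, 0 ≤ Jm y) (hJint : Integrable Jm)
    (hJmass : (∫ y, Jm y) = 1) (x : ℝ) : ∀ n, |bb Jm L n x| ≤ 1 := fun n =>
  abs_le.mpr ⟨by linarith [bb_nonneg (L := L) hJnn n x],
    bb_le_one hJme hJnn hJint hJmass n x⟩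

lemma GG_nonneg (hJnn : ∀ y, 0 ≤ Jm y) {t : ℝ} (ht : 0 ≤ t) (x : ℝ) :
    0 ≤ GG Jm L t x :=
  ES_nonneg (fun n => bb_nonneg hJnn n x) ht

lemma GG_le_exp (hJme : Measurable Jm) (hJnn : ∀ y, 0 ≤ Jm y) (hJint : Integrable Jm)
    (hJmass : (∫ y, Jm y) = 1) {t : ℝ} (ht : 0 ≤ t) (x : ℝ) :
    GG Jm L t x ≤ Real.exp t :=
  ES_le_exp (fun n => bb_nonneg hJnn n x) (fun n => bb_le_one hJme hJnn hJint hJmass n x) ht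

lemma GG_meas (hJme : Measurable Jm) (hJnn : ∀ y, 0 ≤ Jm y) (hJint : Integrable Jm)
    (hJmass : (∫ y, Jm y) = 1) (t : ℝ) : Measurable (fun x => GG Jm L t x) := by
  have hs : ∀ x, Tendsto (fun N => ∑ n ∈ Finset.range N, bb Jm L n x * t ^ n / n !)
      atTop (𝓝 (GG Jm L t x)) := fun x =>
    (ES_summable (bb_abs_le hJme hJnn hJint hJmass x) t).hasSum.tendsto_sum_nat
  refine measurable_of_tendsto_metrizable
    (f := fun N x => ∑ n ∈ Finset.range N, bb Jm L n x * t ^ n / n !) ?_ ?_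
  · intro N
    exact Finset.measurable_sum _ fun n _ => ((bb_meas hJme n).mul measurable_const).div_const _
  · rw [tendsto_pi_nhds]
    exact hs

lemma GG_conv (hJme : Measurable Jm) (hJnn : ∀ y, 0 ≤ Jm y) (hJint : Integrable Jm)
    (hJmass : (∫ y, Jm y) = 1) (t x : ℝ) :
    (∫ y, Jm y * GG Jm L t (x - y)) = ES (fun n => bb Jm L (n+1) x) t := by
  have hpt : ∀ y, Jm y * GG Jm L t (x - y)
      = ∑' n, (Jm y * bb Jm L n (x - y)) * (t ^ n / n !) := by
    intro y
    rw [GG, ES, ← tsum_mul_left]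
    exact tsum_congr fun n => by ring
  have hInt : ∀ n : ℕ, Integrable fun y => (Jm y * bb Jm L n (x - y)) * (t ^ n / n !) :=
    fun n => (bb_integrable hJme hJnn hJint hJmass n x).mul_const _
  have hnorm : Summable fun n => ∫ y, ‖(Jm y * bb Jm L n (x - y)) * (t ^ n / (n ! : ℝ))‖ := by
    refine Summable.of_nonneg_of_le (fun n => integral_nonneg fun y => norm_nonneg _) ?_
      (Real.summable_pow_div_factorial |t|)
    intro n
    have h1 : ∀ y, ‖(Jm y * bb Jm L n (x - y)) * (t ^ n / (n ! : ℝ))‖ ≤ Jm y * (|t| ^ n / n !) := by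
      intro y
      rw [norm_mul, Real.norm_eq_abs, Real.norm_eq_abs, abs_mul, abs_of_nonneg (hJnn y),
        abs_of_nonneg (bb_nonneg hJnn n _), abs_div, abs_pow, Nat.abs_cast]
      exact mul_le_mul_of_nonneg_right
        (mul_le_of_le_one_right (hJnn y) (bb_le_one hJme hJnn hJint hJmass n _))
        (by positivity)
    calc (∫ y, ‖(Jm y * bb Jm L n (x - y)) * (t ^ n / (n ! : ℝ))‖)
        ≤ ∫ y, Jm y * (|t| ^ n / n !) := integral_mono (hInt n).norm (hJint.mul_const _) h1
      _ = |t| ^ n / n ! := by rw [integral_mul_const, hJmass, one_mul]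
  calc (∫ y, Jm y * GG Jm L t (x - y))
      = ∫ y, ∑' n, (Jm y * bb Jm L n (x - y)) * (t ^ n / n !) :=
        integral_congr_ae (Filter.Eventually.of_forall hpt)
    _ = ∑' n, ∫ y, (Jm y * bb Jm L n (x - y)) * (t ^ n / n !) :=
        (integral_tsum_of_summable_integral_norm hInt hnorm).symm
    _ = ES (fun n => bb Jm L (n+1) x) t := by
        refine tsum_congr fun n => ?_
        rw [integral_mul_const, mul_div_assoc]
        rfl

lemma GG_repr (hJme : Measurable Jm) (hJnn : ∀ y, 0 ≤ Jm y) (hJint : Integrable Jm)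
    (hJmass : (∫ y, Jm y) = 1) {t : ℝ} (ht : 0 ≤ t) (x : ℝ) :
    GG Jm L t x = bb Jm L 0 x + ∫ u in (0:ℝ)..t, ES (fun n => bb Jm L (n+1) x) u := by
  have habs1 : ∀ n : ℕ, |bb Jm L (n+1) x| ≤ 1 := fun n =>
    bb_abs_le hJme hJnn hJint hJmass x (n+1)
  have hb0 : ∀ n : ℕ, 0 ≤ bb Jm L (n+1) x := fun n => bb_nonneg hJnn (n+1) x
  have hb1 : ∀ n : ℕ, bb Jm L (n+1) x ≤ 1 := fun n => bb_le_one hJme hJnn hJint hJmass (n+1) x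
  -- swap the integral and the sum on Ioc 0 t
  have hInt : ∀ n : ℕ, Integrable (fun u : ℝ => bb Jm L (n+1) x * u ^ n / n !)
      (volume.restrict (Ioc (0:ℝ) t)) := by
    intro n
    exact ((continuous_const.mul (continuous_pow n)).div_const _).integrableOn_Ioc
  have hnorm : Summable fun n : ℕ =>
      ∫ u in Ioc (0:ℝ) t, ‖bb Jm L (n+1) x * u ^ n / (n ! : ℝ)‖ := by
    refine Summable.of_nonneg_of_le (fun n => integral_nonneg fun y => norm_nonneg _) ?_
      ((Real.summable_pow_div_factorial t).mul_left t)
    intro n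
    have h1 : ∀ u ∈ Ioc (0:ℝ) t, ‖bb Jm L (n+1) x * u ^ n / (n ! : ℝ)‖ ≤ t ^ n / n ! := by
      intro u hu
      rw [Real.norm_eq_abs, abs_div, abs_mul, abs_pow, Nat.abs_cast,
        abs_of_nonneg (hb0 n), abs_of_nonneg hu.1.le]
      have : bb Jm L (n+1) x * u ^ n ≤ 1 * t ^ n :=
        mul_le_mul (hb1 n) (pow_le_pow_left₀ hu.1.le hu.2 n) (pow_nonneg hu.1.le n) zero_le_one
      rw [one_mul] at this
      exact div_le_div_of_nonneg_right this (by positivity)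
    calc (∫ u in Ioc (0:ℝ) t, ‖bb Jm L (n+1) x * u ^ n / (n ! : ℝ)‖)
        ≤ ∫ _u in Ioc (0:ℝ) t, (t ^ n / n !) := by
          refine setIntegral_mono_on (hInt n).norm ((integrableOn_const_iff).mpr ?_)
            measurableSet_Ioc h1
          right; rw [Real.volume_Ioc]; exact ENNReal.ofReal_lt_top
      _ = (volume (Ioc (0:ℝ) t)).toReal * (t ^ n / n !) := by rw [setIntegral_const]; rfl
      _ ≤ t * (t ^ n / n !) := by
          rw [Real.volume_Ioc, ENNReal.toReal_ofReal (by linarith)]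
          have : 0 ≤ t ^ n / (n ! : ℝ) := by positivity
          nlinarith
  have hswap : (∫ u in (0:ℝ)..t, ES (fun n => bb Jm L (n+1) x) u)
      = ∑' n : ℕ, ∫ u in Ioc (0:ℝ) t, bb Jm L (n+1) x * u ^ n / n ! := by
    rw [intervalIntegral.integral_of_le ht]
    exact (integral_tsum_of_summable_integral_norm hInt hnorm).symm
  have heval : ∀ n : ℕ, (∫ u in Ioc (0:ℝ) t, bb Jm L (n+1) x * u ^ n / n !)
      = bb Jm L (n+1) x * t ^ (n+1) / (n+1)! := by
    intro n
    have : (∫ u in Ioc (0:ℝ) t, bb Jm L (n+1) x * u ^ n / n !)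
        = ∫ u in (0:ℝ)..t, (bb Jm L (n+1) x / n !) * u ^ n := by
      rw [intervalIntegral.integral_of_le ht]
      refine setIntegral_congr_fun measurableSet_Ioc fun u _ => by ring
    rw [this, intervalIntegral.integral_const_mul, integral_pow]
    rw [Nat.factorial_succ]
    have h1 : (n ! : ℝ) ≠ 0 := by positivity
    have h2 : (n : ℝ) + 1 ≠ 0 := by positivity
    push_cast
    rw [zero_pow (Nat.succ_ne_zero n), sub_zero]
    field_simp
    try ring
    try (left; trivial)
  have hsum : Summable fun n : ℕ => bb Jm L n x * t ^ n / n ! :=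
    ES_summable (bb_abs_le hJme hJnn hJint hJmass x) t
  rw [hswap]
  have : GG Jm L t x = bb Jm L 0 x * t ^ 0 / 0!
      + ∑' n : ℕ, bb Jm L (n+1) x * t ^ (n+1) / (n+1)! := Summable.tsum_eq_zero_add hsum
  rw [this]
  simp only [pow_zero, Nat.factorial_zero, Nat.cast_one, mul_one, div_one]
  congr 1
  exact tsum_congr fun n => (heval n).symm

end GGsec
section GGsec2

variable {Jm : ℝ → ℝ} {L : ℝ}

lemma ES_contOn_Ioi {c : ℕ → ℝ} (h1 : ∀ n, |c n| ≤ 1) :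
    ContinuousOn (ES c) (Ioi (0:ℝ)) := by
  intro y hy
  exact ((ES_continuousOn h1 (y+1)).continuousAt
    (Icc_mem_nhds (mem_Ioi.mp hy) (by linarith [mem_Ioi.mp hy]))).continuousWithinAt

lemma ES_contOn_Ici {c : ℕ → ℝ} (h1 : ∀ n, |c n| ≤ 1) :
    ContinuousOn (ES c) (Ici (0:ℝ)) := by
  intro y hy
  have h := (ES_continuousOn h1 (y+1)) y ⟨hy, by linarith⟩
  refine h.mono_of_mem_nhdsWithin ?_
  rw [← Ici_inter_Iic]
  exact Filter.inter_mem self_mem_nhdsWithin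
    (mem_nhdsWithin_of_mem_nhds (Iic_mem_nhds (by linarith)))

lemma GG_hasDerivAt (hJme : Measurable Jm) (hJnn : ∀ y, 0 ≤ Jm y) (hJint : Integrable Jm)
    (hJmass : (∫ y, Jm y) = 1) {t : ℝ} (ht : 0 < t) (x : ℝ) :
    HasDerivAt (fun τ => GG Jm L τ x) (ES (fun n => bb Jm L (n+1) x) t) t := by
  have habs1 : ∀ n : ℕ, |bb Jm L (n+1) x| ≤ 1 := fun n =>
    bb_abs_le hJme hJnn hJint hJmass x (n+1)
  set g : ℝ → ℝ := ES (fun n => bb Jm L (n+1) x) with hg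
  have hgcAt : ContinuousAt g t :=
    (ES_continuousOn habs1 (t+1)).continuousAt (Icc_mem_nhds ht (by linarith))
  have hgInt : IntervalIntegrable g volume 0 t := by
    apply ContinuousOn.intervalIntegrable
    rw [uIcc_of_le ht.le]
    exact ES_continuousOn habs1 t
  have hmf : StronglyMeasurableAtFilter g (𝓝 t) volume :=
    (ES_contOn_Ioi habs1).stronglyMeasurableAtFilter isOpen_Ioi t ht
  have hF : HasDerivAt (fun τ => bb Jm L 0 x + ∫ u in (0:ℝ)..τ, g u) (g t) t :=
    HasDerivAt.const_add _
      (intervalIntegral.integral_hasDerivAt_right hgInt hmf hgcAt)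
  refine hF.congr_of_eventuallyEq ?_
  filter_upwards [IsOpen.mem_nhds isOpen_Ioi ht] with τ hτ
  exact GG_repr hJme hJnn hJint hJmass (le_of_lt hτ) x

lemma GG_contOn (hJme : Measurable Jm) (hJnn : ∀ y, 0 ≤ Jm y) (hJint : Integrable Jm)
    (hJmass : (∫ y, Jm y) = 1) (x : ℝ) :
    ContinuousOn (fun t => GG Jm L t x) (Ici (0:ℝ)) :=
  ES_contOn_Ici (bb_abs_le hJme hJnn hJint hJmass x)

end GGsec2

/-- `(a-θ)⁺ - (b-θ)⁺ ≥ min (a-b) 0`. -/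
lemma maxsub_ineq (θ a b : ℝ) : min (a - b) 0 ≤ max (a - θ) 0 - max (b - θ) 0 := by
  rcases le_total (a - θ) 0 with h1 | h1 <;> rcases le_total (b - θ) 0 with h2 | h2 <;>
    rcases le_total (a - b) 0 with h3 | h3 <;>
    simp [max_eq_right, max_eq_left, min_eq_left, min_eq_right, h1, h2, h3] <;> linarith

/-- Comparison/nonnegativity principle via Picard iteration. -/
lemma comparison_nonneg
    {Jm : ℝ → ℝ} (hJme : Measurable Jm) (hJnn : ∀ y, 0 ≤ Jm y) (hJint : Integrable Jm)
    (hJmass : (∫ y, Jm y) = 1) {rp : ℝ} (hrp : 0 ≤ rp) {T' : ℝ}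
    {v : ℝ → ℝ → ℝ}
    (hvmeas : ∀ t, t ∈ Icc 0 T' → Measurable (v t))
    {B : ℝ} (hB : ∀ t, t ∈ Icc 0 T' → ∀ x, |v t x| ≤ B)
    (hvcont : ∀ x, ContinuousOn (fun t => v t x) (Ici 0))
    (hv0 : ∀ x, 0 ≤ v 0 x)
    (hderiv : ∀ t, 0 < t → t ≤ T' → ∀ x, ∃ d, HasDerivAt (fun τ => v τ x) d t ∧
      (∫ y, Jm y * v t (x - y)) - v t x + rp * min (v t x) 0 ≤ d) :
    ∀ t, t ∈ Icc 0 T' → ∀ x, 0 ≤ v t x := by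
  intro t ht x
  have hB0 : 0 ≤ B := le_trans (abs_nonneg _) (hB 0 ⟨le_refl 0, le_trans ht.1 ht.2⟩ x)
  set K := 1 + rp with hK
  have hK0 : 0 < K := by linarith
  have main : ∀ n : ℕ, ∀ t, t ∈ Icc 0 T' → ∀ x, -(B * (K*t)^n / n !) ≤ v t x := by
    intro n
    induction n with
    | zero =>
      intro t ht x
      simpa using (abs_le.mp (hB t ht x)).1
    | succ n ih =>
      intro t ht x
      rcases eq_or_lt_of_le ht.1 with h0 | h0
      · rw [← h0]
        have := hv0 x
        have hz : (K * 0 : ℝ)^(n+1) = 0 := by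
          rw [mul_zero, zero_pow (Nat.succ_ne_zero n)]
        rw [hz]
        simpa using this
      · -- 0 < t
        set σ : ℝ → ℝ := fun τ => B * (K*τ)^n / n ! with hσ
        have hσcont : Continuous σ := by
          apply Continuous.div_const
          exact continuous_const.mul ((continuous_const.mul continuous_id).pow n)
        have hσnn : ∀ τ, 0 ≤ τ → 0 ≤ σ τ := by
          intro τ hτ
          have : 0 ≤ (K*τ)^n := pow_nonneg (by positivity) n
          positivity
        have hIcont : Continuous fun τ : ℝ => K * Real.exp τ * σ τ :=
          (continuous_const.mul Real.continuous_exp).mul hσcont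
        set Φ : ℝ → ℝ := fun τ => Real.exp τ * v τ x + ∫ u in (0:ℝ)..τ, K * Real.exp u * σ u
          with hΦ
        have hprim : ∀ τ, HasDerivAt (fun τ => ∫ u in (0:ℝ)..τ, K * Real.exp u * σ u)
            (K * Real.exp τ * σ τ) τ := fun τ => ftc1 hIcont τ
        have hΦcont : ContinuousOn Φ (Icc 0 t) := by
          apply ContinuousOn.add
          · exact Real.continuous_exp.continuousOn.mul
              ((hvcont x).mono (Icc_subset_Ici_self))
          · exact (continuous_iff_continuousAt.mpr fun τ => (hprim τ).continuousAt).continuousOn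
        have hτT : ∀ τ, τ ∈ Ioo 0 t → τ ∈ Icc 0 T' :=
          fun τ hτ => ⟨hτ.1.le, le_trans hτ.2.le ht.2⟩
        have hΦderiv : ∀ τ ∈ Ioo 0 t, ∃ dd, HasDerivAt Φ dd τ ∧ 0 ≤ dd := by
          intro τ hτ
          obtain ⟨d, hd, hdge⟩ := hderiv τ hτ.1 (le_trans hτ.2.le ht.2) x
          refine ⟨Real.exp τ * v τ x + Real.exp τ * d + K * Real.exp τ * σ τ,
            ?_, ?_⟩
          · have h1 : HasDerivAt (fun τ => Real.exp τ * v τ x)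
                (Real.exp τ * v τ x + Real.exp τ * d) τ :=
              (Real.hasDerivAt_exp τ).mul hd
            exact h1.add (hprim τ)
          · -- positivity of the derivative
            have hIv : Integrable (fun y => Jm y * v τ (x - y)) := by
              refine (hJint.mul_const B).mono' ?_ ?_
              · exact (hJme.mul ((hvmeas τ (hτT τ hτ)).comp
                  (measurable_const.sub measurable_id))).aestronglyMeasurable
              · filter_upwards with y
                rw [Real.norm_eq_abs, abs_mul, abs_of_nonneg (hJnn y)]
                exact mul_le_mul_of_nonneg_left (hB τ (hτT τ hτ) _) (hJnn y)
            have hIc : Integrable (fun y => Jm y * (-σ τ)) := hJint.mul_const _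
            have hint : -σ τ ≤ ∫ y, Jm y * v τ (x - y) := by
              calc -σ τ = ∫ y, Jm y * (-σ τ) := by
                    rw [integral_mul_const, hJmass, one_mul]
                _ ≤ ∫ y, Jm y * v τ (x-y) :=
                    integral_mono hIc hIv fun y =>
                      mul_le_mul_of_nonneg_left (ih τ (hτT τ hτ) (x-y)) (hJnn y)
            have hmin : -σ τ ≤ min (v τ x) 0 :=
              le_min (ih τ (hτT τ hτ) x) (neg_nonpos.mpr (hσnn τ hτ.1.le))
            have hrpmin : rp * (-σ τ) ≤ rp * min (v τ x) 0 :=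
              mul_le_mul_of_nonneg_left hmin hrp
            have h1 : -(K * σ τ) ≤ v τ x + d := by
              have := hdge
              have h2 : (∫ y, Jm y * v τ (x - y)) - v τ x + rp * min (v τ x) 0
                  ≥ -σ τ - v τ x + rp * (-σ τ) := by linarith
              have : -σ τ - v τ x + rp * (-σ τ) ≤ d := by linarith
              rw [hK]; ring_nf; ring_nf at this; linarith
            have h2 : Real.exp τ * (-(K*σ τ)) ≤ Real.exp τ * (v τ x + d) :=
              mul_le_mul_of_nonneg_left h1 (Real.exp_pos τ).le
            nlinarith [Real.exp_pos τ]
        have hmono : MonotoneOn Φ (Icc 0 t) := by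
          apply monotoneOn_of_deriv_nonneg (convex_Icc 0 t) hΦcont
          · intro τ hτ
            rw [interior_Icc] at hτ
            obtain ⟨dd, hdd, _⟩ := hΦderiv τ hτ
            exact hdd.differentiableAt.differentiableWithinAt
          · intro τ hτ
            rw [interior_Icc] at hτ
            obtain ⟨dd, hdd, hdd0⟩ := hΦderiv τ hτ
            rw [hdd.deriv]
            exact hdd0
        have h01 : Φ 0 ≤ Φ t :=
          hmono ⟨le_refl 0, h0.le⟩ ⟨h0.le, le_refl t⟩ h0.le
        have hΦ0 : Φ 0 = v 0 x := by
          simp [hΦ]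
        have hIb : (∫ u in (0:ℝ)..t, K * Real.exp u * σ u)
            ≤ Real.exp t * (B * (K*t)^(n+1) / (n+1)!) := by
          have hmono' : ∀ u ∈ Icc (0:ℝ) t, K * Real.exp u * σ u
              ≤ Real.exp t * (K * (B * K^n / n !) * u^n) := by
            intro u hu
            have he : Real.exp u ≤ Real.exp t := Real.exp_le_exp.mpr hu.2
            have hσval : σ u = (B * K^n / (n ! : ℝ)) * u^n := by
              simp only [hσ]; rw [mul_pow]; ring
            rw [hσval]
            have hun : 0 ≤ u ^ n := pow_nonneg hu.1 n
            have h3 : 0 ≤ B * K ^ n / (n ! : ℝ) := by positivity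
            have hc : 0 ≤ K * (B * K ^ n / (n ! : ℝ)) * u ^ n :=
              mul_nonneg (mul_nonneg hK0.le h3) hun
            calc K * Real.exp u * (B * K ^ n / (n ! : ℝ) * u ^ n)
                = K * (B * K ^ n / (n ! : ℝ)) * u ^ n * Real.exp u := by ring
              _ ≤ K * (B * K ^ n / (n ! : ℝ)) * u ^ n * Real.exp t :=
                  mul_le_mul_of_nonneg_left he hc
              _ = Real.exp t * (K * (B * K ^ n / (n ! : ℝ)) * u ^ n) := by ring
          calc (∫ u in (0:ℝ)..t, K * Real.exp u * σ u)
              ≤ ∫ u in (0:ℝ)..t, Real.exp t * (K * (B * K^n / n !) * u^n) := by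
                refine intervalIntegral.integral_mono_on h0.le
                  (hIcont.intervalIntegrable 0 t)
                  ((continuous_const.mul (continuous_const.mul (continuous_pow n))).intervalIntegrable 0 t)
                  hmono'
            _ = Real.exp t * (K * (B * K^n / (n ! : ℝ)) * ((t^(n+1) - 0^(n+1))/((n:ℝ)+1))) := by
                rw [intervalIntegral.integral_const_mul, intervalIntegral.integral_const_mul,
                  integral_pow]
            _ = Real.exp t * (K * (B * K^n / (n ! : ℝ))) * (t^(n+1)/((n:ℝ)+1)) := by
                rw [zero_pow (Nat.succ_ne_zero n), sub_zero]; ring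
            _ = Real.exp t * (B * (K*t)^(n+1) / (n+1)!) := by
                rw [Nat.factorial_succ, mul_pow]
                have h1 : (n ! : ℝ) ≠ 0 := by positivity
                have h2 : (n : ℝ) + 1 ≠ 0 := by positivity
                push_cast
                field_simp
                ring
        have hfinal : Real.exp t * (-(B * (K*t)^(n+1) / (n+1)!)) ≤ Real.exp t * v t x := by
          have : v 0 x ≤ Φ t := by rw [← hΦ0]; exact h01
          have hΦt : Φ t = Real.exp t * v t x + ∫ u in (0:ℝ)..t, K * Real.exp u * σ u := rfl
          have hv00 := hv0 x
          rw [mul_neg]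
          linarith
        exact le_of_mul_le_mul_left hfinal (Real.exp_pos t)
  have htends : Tendsto (fun n : ℕ => -(B * (K*t)^n / n !)) atTop (𝓝 0) := by
    have h1 := (FloorSemiring.tendsto_pow_div_factorial_atTop (K*t)).const_mul B
    have h2 : (fun n : ℕ => -(B * (K*t)^n / n !)) = fun n => -(B * ((K*t)^n / n !)) := by
      funext n; ring_nf
    rw [h2]
    simpa using h1.neg
  exact le_of_tendsto htends (Filter.Eventually.of_forall fun n => main n t ht x)
lemma ES_zero (c : ℕ → ℝ) : ES c 0 = c 0 := by
  rw [ES, tsum_eq_single 0 (fun n hn => by rw [zero_pow hn]; simp)]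
  simp

end TEaux

set_option maxHeartbeats 2000000 in
/-- **Corollary (Asymptotic extinction criterion for the toy problem, exponentially bounded
kernels).** Under (K1), (K2) and `∫ e^{λ₀ x} J(x) dx < ∞` for some `λ₀ > 0`, there are
constants `C⁻ > 0`, `C̃⁻ > 0` and `ε₀ > 0` such that for each `ε ∈ (0, ε₀)` and each
`0 < L < C⁻ ln(1/ε)`, the solution of `∂ₜ w = J ∗ w - w + r⁺ (w-θ)₊` starting from
`(θ+ε) 1_{(-L,L)}` is everywhere `≤ θ` at time `T = C̃⁻ ln(1/ε)`. -/
theorem toy_asymptotic_extinction_exponential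
    (J : ℝ → ℝ) (rp θ lam0 : ℝ)
    (hK1 : K1 J) (hK2 : AntitoneOn J (Set.Ioi 0))
    (hrp : 0 < rp) (hθ : θ ∈ Set.Ioo (0:ℝ) 1)
    (hlam0 : 0 < lam0)
    (hexp : Integrable (fun x => Real.exp (lam0 * x) * J x)) :
    ∃ Cm > 0, ∃ Ct > 0, ∃ ε₀ > 0, ∀ ε, 0 < ε → ε < ε₀ → ∀ L, 0 < L →
      L < Cm * Real.log (1/ε) →
      ∀ w, IsBddSol J (fun v => rp * max (v - θ) 0) (stepInit (θ + ε) L) w →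
        ∀ x, w (Ct * Real.log (1/ε)) x ≤ θ := by
  classical
  obtain ⟨hJ0, hJeven, hJint, hJmass⟩ := hK1
  obtain ⟨J₀, hJ₀meas, hJ₀ae⟩ : ∃ J₀ : ℝ → ℝ, Measurable J₀ ∧ J =ᵐ[volume] J₀ := by
    have h := hJint.aestronglyMeasurable
    exact ⟨h.mk J, h.stronglyMeasurable_mk.measurable, h.ae_eq_mk⟩
  set Jm : ℝ → ℝ := fun y => max (J₀ y) 0 with hJmdef
  have hJme : Measurable Jm := hJ₀meas.max measurable_const
  have hJnn : ∀ y, 0 ≤ Jm y := fun y => le_max_right _ _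
  have hJae : J =ᵐ[volume] Jm := by
    filter_upwards [hJ₀ae] with y hy
    simp only [hJmdef, ← hy]
    exact (max_eq_left (hJ0 y)).symm
  have hJmint : Integrable Jm := hJint.congr hJae
  have hJmmass : (∫ y, Jm y) = 1 := by rw [← integral_congr_ae hJae]; exact hJmass
  have hsym : ∀ r : ℝ, (∫ y in Iic (-r), Jm y) = ∫ y in Ici r, Jm y := by
    intro r
    have h1 : (∫ y in Iic (-r), Jm y) = ∫ y in Iic (-r), J y :=
      integral_congr_ae (ae_restrict_of_ae hJae.symm)
    have h2 : (∫ y in Ici r, Jm y) = ∫ y in Ici r, J y :=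
      integral_congr_ae (ae_restrict_of_ae hJae.symm)
    rw [h1, h2]
    have h4 := integral_comp_neg_Iic (-r) J
    have h5 : (∫ x in Iic (-r), J (-x)) = ∫ x in Iic (-r), J x :=
      integral_congr_ae (ae_restrict_of_ae (Filter.Eventually.of_forall fun x => hJeven x))
    rw [h5, neg_neg] at h4
    rw [h4, integral_Ici_eq_integral_Ioi]
  obtain ⟨s, hs, hps⟩ : ∃ s : ℝ, 0 < s ∧ 0 < ∫ y in Ici s, Jm y := by
    by_contra hcon
    push_neg at hcon
    have hz : ∀ n : ℕ, ∀ᵐ y : ℝ, y ∈ Ici (1/((n:ℝ)+1)) → Jm y = 0 := by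
      intro n
      have hs' : (0:ℝ) < 1/((n:ℝ)+1) := by positivity
      have h0' : (∫ y in Ici (1/((n:ℝ)+1)), Jm y) = 0 :=
        le_antisymm (hcon _ hs') (setIntegral_nonneg measurableSet_Ici fun y _ => hJnn y)
      have h1 := (integral_eq_zero_iff_of_nonneg (fun y => hJnn y)
        hJmint.integrableOn).mp h0'
      exact (ae_restrict_iff' measurableSet_Ici).mp h1
    have hzneg : ∀ n : ℕ, ∀ᵐ y : ℝ, y ∈ Iic (-(1/((n:ℝ)+1))) → Jm y = 0 := by
      intro n
      have hs' : (0:ℝ) < 1/((n:ℝ)+1) := by positivity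
      have h0' : (∫ y in Iic (-(1/((n:ℝ)+1))), Jm y) = 0 := by
        rw [hsym]
        exact le_antisymm (hcon _ hs') (setIntegral_nonneg measurableSet_Ici fun y _ => hJnn y)
      have h1 := (integral_eq_zero_iff_of_nonneg (fun y => hJnn y)
        hJmint.integrableOn).mp h0'
      exact (ae_restrict_iff' measurableSet_Iic).mp h1
    have hzero : ∀ᵐ y : ℝ, Jm y = 0 := by
      have hne : ∀ᵐ y : ℝ, y ≠ 0 := by
        rw [ae_iff]
        have h6 : {y : ℝ | ¬ y ≠ 0} = {0} := by ext y; simp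
        rw [h6]
        exact measure_singleton 0
      filter_upwards [ae_all_iff.mpr hz, ae_all_iff.mpr hzneg, hne] with y h1 h2 h3
      rcases lt_trichotomy y 0 with hy | hy | hy
      · obtain ⟨n, hn⟩ := exists_nat_one_div_lt (show (0:ℝ) < -y by linarith)
        exact h2 n (by simp only [mem_Iic]; linarith)
      · exact absurd hy h3
      · obtain ⟨n, hn⟩ := exists_nat_one_div_lt hy
        exact h1 n (by simp only [mem_Ici]; linarith)
    have hzero' : (∫ y, Jm y) = 0 := integral_eq_zero_of_ae hzero
    rw [hJmmass] at hzero'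
    norm_num at hzero'
  set p : ℝ := ∫ y in Ici s, Jm y with hpdef
  have hp0 : 0 < p := hps
  have hp1 : p ≤ 1 := by
    rw [hpdef, ← hJmmass]
    exact setIntegral_le_integral hJmint (Filter.Eventually.of_forall hJnn)
  have h3rp : (0:ℝ) < 3*rp+1 := by linarith
  set Ct : ℝ := 1/(2*(3*rp+1)) with hCtdef
  have hCt : 0 < Ct := by positivity
  set Cm : ℝ := Ct * p * s / 4 with hCmdef
  have hCm : 0 < Cm := by positivity
  have hθ0 : 0 < θ := hθ.1
  have hθ1 : θ < 1 := hθ.2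
  refine ⟨Cm, hCm, Ct, hCt, min ((θ/2)^2) (Real.exp (-(2/(Ct*p)))), by positivity, ?_⟩
  intro ε hε hεlt L hL hLlt w hw x
  obtain ⟨⟨M, hM⟩, hwmeas, hwcont, hw0, hwderiv⟩ := hw
  have hεθ : ε ≤ (θ/2)^2 := le_trans hεlt.le (min_le_left _ _)
  have hεexp : ε ≤ Real.exp (-(2/(Ct*p))) := le_trans hεlt.le (min_le_right _ _)
  have hε1 : ε < 1 := lt_of_le_of_lt hεθ (by nlinarith)
  set Λ : ℝ := Real.log (1/ε) with hΛdef
  have hinv : (1:ℝ) < 1/ε := (lt_div_iff₀ hε).mpr (by linarith)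
  have hΛ : 0 < Λ := Real.log_pos hinv
  have hexpΛ : Real.exp Λ = 1/ε := Real.exp_log (by positivity)
  have hΛge : 2/(Ct*p) ≤ Λ := by
    have h1 : Real.exp (2/(Ct*p)) ≤ 1/ε := by
      have h2 := one_div_le_one_div_of_le hε hεexp
      rw [one_div (Real.exp (-(2/(Ct*p)))), ← Real.exp_neg, neg_neg] at h2
      exact h2
    calc 2/(Ct*p) = Real.log (Real.exp (2/(Ct*p))) := (Real.log_exp _).symm
      _ ≤ Real.log (1/ε) := Real.log_le_log (Real.exp_pos _) h1
  set T : ℝ := Ct * Λ with hTdef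
  have hT : 0 < T := mul_pos hCt hΛ
  set c : ℝ → ℝ := fun t => θ + ε + ε * Real.exp (3*rp*t) with hcdef
  set W : ℝ → ℝ → ℝ := fun t z => c t * Real.exp (-t) * TEaux.GG Jm L t z with hWdef
  have hccont : Continuous c := by
    simp only [hcdef]
    exact continuous_const.add (continuous_const.mul
      (Real.continuous_exp.comp (continuous_const.mul continuous_id)))
  have hc0 : ∀ t, 0 < c t := by
    intro t
    have h1 := Real.exp_pos (3*rp*t)
    have h2 := mul_pos hε h1
    simp only [hcdef]
    linarith
  have hcmono : ∀ t, 0 ≤ t → t ≤ T → c t ≤ c T := by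
    intro t ht0 htT
    simp only [hcdef]
    have h1 : Real.exp (3*rp*t) ≤ Real.exp (3*rp*T) :=
      Real.exp_le_exp.mpr (by nlinarith)
    have h2 := mul_le_mul_of_nonneg_left h1 hε.le
    linarith
  have hU01 : ∀ t, 0 ≤ t → ∀ z,
      0 ≤ Real.exp (-t) * TEaux.GG Jm L t z ∧ Real.exp (-t) * TEaux.GG Jm L t z ≤ 1 := by
    intro t ht z
    constructor
    · exact mul_nonneg (Real.exp_pos _).le (TEaux.GG_nonneg hJnn ht z)
    · have h1 := TEaux.GG_le_exp (L := L) hJme hJnn hJmint hJmmass ht z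
      calc Real.exp (-t) * TEaux.GG Jm L t z ≤ Real.exp (-t) * Real.exp t :=
            mul_le_mul_of_nonneg_left h1 (Real.exp_pos _).le
        _ = 1 := by rw [← Real.exp_add]; simp
  have hWb : ∀ t, 0 ≤ t → ∀ z, 0 ≤ W t z ∧ W t z ≤ c t := by
    intro t ht z
    have hU := hU01 t ht z
    have hct := hc0 t
    have hWeq : W t z = c t * (Real.exp (-t) * TEaux.GG Jm L t z) := by
      simp only [hWdef]; ring
    constructor
    · rw [hWeq]; exact mul_nonneg hct.le hU.1
    · rw [hWeq]
      calc c t * (Real.exp (-t) * TEaux.GG Jm L t z) ≤ c t * 1 :=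
            mul_le_mul_of_nonneg_left hU.2 hct.le
        _ = c t := mul_one _
  set v : ℝ → ℝ → ℝ := fun t z => W t z - w t z with hvdef
  have hM0 : 0 ≤ M := le_trans (abs_nonneg _) (hM 0 0 le_rfl)
  have hcomp : ∀ t, t ∈ Icc 0 T → ∀ z, 0 ≤ v t z := by
    refine TEaux.comparison_nonneg hJme hJnn hJmint hJmmass hrp.le (v := v) (B := c T + M)
      ?_ ?_ ?_ ?_ ?_
    · intro t ht
      simp only [hvdef, hWdef]
      exact ((TEaux.GG_meas hJme hJnn hJmint hJmmass t).const_mul _).sub (hwmeas t ht.1)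
    · intro t ht z
      have hWz := hWb t ht.1 z
      have hwz := hM t z ht.1
      have hcz := hcmono t ht.1 ht.2
      rw [abs_le]
      constructor
      · simp only [hvdef]
        have h1 := (abs_le.mp hwz).2
        linarith [hWz.1, hc0 T]
      · simp only [hvdef]
        have h1 := (abs_le.mp hwz).1
        linarith [hWz.2]
    · intro z
      simp only [hvdef, hWdef]
      exact ((hccont.continuousOn.mul
        ((Real.continuous_exp.comp continuous_neg).continuousOn)).mul
        (TEaux.GG_contOn hJme hJnn hJmint hJmmass z)).sub (hwcont z)
    · intro z
      simp only [hvdef, hWdef]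
      rw [hw0 z]
      have hG0 : TEaux.GG Jm L 0 z = TEaux.bb Jm L 0 z := TEaux.ES_zero _
      rw [hG0]
      simp only [neg_zero, Real.exp_zero, mul_one, stepInit]
      have hc00 : c 0 = θ + 2*ε := by
        simp only [hcdef]
        rw [mul_zero, Real.exp_zero]
        ring
      rw [hc00]
      by_cases hz : z ∈ Set.Ioo (-L) L
      · rw [show TEaux.bb Jm L 0 z = (1:ℝ) from by
            simp [TEaux.bb, Set.indicator_of_mem hz],
          Set.indicator_of_mem hz]
        linarith
      · rw [show TEaux.bb Jm L 0 z = (0:ℝ) from by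
            simp [TEaux.bb, Set.indicator_of_notMem hz],
          Set.indicator_of_notMem hz]
        simp
    · intro t ht htT z
      have ht0 : 0 ≤ t := ht.le
      have hG := TEaux.GG_hasDerivAt (L := L) hJme hJnn hJmint hJmmass ht z
      set Gd : ℝ := TEaux.ES (fun n => TEaux.bb Jm L (n+1) z) t with hGddef
      have hc' : HasDerivAt c (ε * (Real.exp (3*rp*t) * (3*rp))) t := by
        simp only [hcdef]
        refine HasDerivAt.const_add _ (HasDerivAt.const_mul ε ?_)
        have h2 : HasDerivAt (fun τ : ℝ => 3*rp*τ) (3*rp) t := by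
          simpa using (hasDerivAt_id t).const_mul (3*rp)
        exact (Real.hasDerivAt_exp _).comp t h2
      have he' : HasDerivAt (fun τ : ℝ => Real.exp (-τ)) (-Real.exp (-t)) t := by
        have h4 : HasDerivAt (fun τ : ℝ => -τ) (-1 : ℝ) t := (hasDerivAt_id t).neg
        simpa [Function.comp_def] using (Real.hasDerivAt_exp _).comp t h4
      have hce : HasDerivAt (fun τ => c τ * Real.exp (-τ))
          ((ε * (Real.exp (3*rp*t) * (3*rp))) * Real.exp (-t) + c t * (-Real.exp (-t))) t :=
        hc'.mul he'
      have hWd : HasDerivAt (fun τ => W τ z)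
          (((ε * (Real.exp (3*rp*t) * (3*rp))) * Real.exp (-t) + c t * (-Real.exp (-t)))
             * TEaux.GG Jm L t z + (c t * Real.exp (-t)) * Gd) t := hce.mul hG
      have hwd := hwderiv t z ht
      simp only [hvdef]
      refine ⟨_, hWd.sub hwd, ?_⟩
      have hIw : Integrable (fun y => Jm y * w t (z - y)) := by
        refine (hJmint.mul_const M).mono' ?_ ?_
        · exact (hJme.mul ((hwmeas t ht0).comp
            (measurable_const.sub measurable_id))).aestronglyMeasurable
        · filter_upwards with y
          rw [Real.norm_eq_abs, abs_mul, abs_of_nonneg (hJnn y)]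
          exact mul_le_mul_of_nonneg_left (hM t _ ht0) (hJnn y)
      have hIG : Integrable (fun y => Jm y * TEaux.GG Jm L t (z - y)) := by
        refine (hJmint.mul_const (Real.exp t)).mono' ?_ ?_
        · exact (hJme.mul ((TEaux.GG_meas hJme hJnn hJmint hJmmass t).comp
            (measurable_const.sub measurable_id))).aestronglyMeasurable
        · filter_upwards with y
          rw [Real.norm_eq_abs, abs_mul, abs_of_nonneg (hJnn y),
            abs_of_nonneg (TEaux.GG_nonneg hJnn ht0 _)]
          exact mul_le_mul_of_nonneg_left
            (TEaux.GG_le_exp hJme hJnn hJmint hJmmass ht0 _) (hJnn y)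
      have hconvG : (∫ y, Jm y * TEaux.GG Jm L t (z - y)) = Gd :=
        TEaux.GG_conv hJme hJnn hJmint hJmmass t z
      have hWfun : (fun y => Jm y * W t (z - y))
          = fun y => (c t * Real.exp (-t)) * (Jm y * TEaux.GG Jm L t (z - y)) := by
        funext y; simp only [hWdef]; ring
      have hIW : Integrable (fun y => Jm y * W t (z - y)) := by
        rw [hWfun]; exact hIG.const_mul _
      have hconvW : (∫ y, Jm y * W t (z - y)) = c t * Real.exp (-t) * Gd := by
        rw [hWfun, integral_const_mul, hconvG]
      have hsplit : (∫ y, J y * (w t (z - y) - w t z))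
          = (∫ y, Jm y * w t (z - y)) - w t z := by
        have e1 : (∫ y, J y * (w t (z - y) - w t z))
            = ∫ y, (Jm y * w t (z - y) - Jm y * w t z) := by
          refine integral_congr_ae ?_
          filter_upwards [hJae] with y hy
          rw [hy]
          ring
        rw [e1, integral_sub hIw (hJmint.mul_const _), integral_mul_const, hJmmass, one_mul]
      have hvint : (∫ y, Jm y * (W t (z - y) - w t (z - y)))
          = (∫ y, Jm y * W t (z - y)) - ∫ y, Jm y * w t (z - y) := by
        have e2 : (fun y => Jm y * (W t (z - y) - w t (z - y)))
            = fun y => (Jm y * W t (z - y) - Jm y * w t (z - y)) := by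
          funext y; ring
        rw [e2, integral_sub hIW hIw]
      have hE1 : (1:ℝ) ≤ Real.exp (3*rp*t) := Real.one_le_exp (by positivity)
      have hU := hU01 t ht0 z
      have hWθ : max (W t z - θ) 0
          ≤ 2*ε*Real.exp (3*rp*t) * (Real.exp (-t) * TEaux.GG Jm L t z) := by
        apply max_le
        · have hWU : W t z = c t * (Real.exp (-t) * TEaux.GG Jm L t z) := by
            simp only [hWdef]; ring
          rw [hWU]
          simp only [hcdef]
          linarith [mul_nonneg hθ0.le (sub_nonneg.mpr hU.2),
            mul_nonneg (mul_nonneg hε.le hU.1) (sub_nonneg.mpr hE1)]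
        · exact mul_nonneg (by positivity) hU.1
      have hmaxsub := TEaux.maxsub_ineq θ (W t z) (w t z)
      have hFge : rp * max (w t z - θ) 0 + rp * min (W t z - w t z) 0
          ≤ ε * (Real.exp (3*rp*t) * (3*rp)) * (Real.exp (-t) * TEaux.GG Jm L t z) := by
        have h1 : max (w t z - θ) 0 + min (W t z - w t z) 0 ≤ max (W t z - θ) 0 := by
          linarith
        have h2 : rp * (max (w t z - θ) 0 + min (W t z - w t z) 0)
            ≤ rp * max (W t z - θ) 0 := mul_le_mul_of_nonneg_left h1 hrp.le
        have h3 : rp * max (W t z - θ) 0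
            ≤ rp * (2*ε*Real.exp (3*rp*t) * (Real.exp (-t) * TEaux.GG Jm L t z)) :=
          mul_le_mul_of_nonneg_left hWθ hrp.le
        have h4 : 0 ≤ ε * Real.exp (3*rp*t) * (Real.exp (-t) * TEaux.GG Jm L t z) :=
          mul_nonneg (by positivity) hU.1
        linarith [h2, h3, mul_nonneg hrp.le h4]
      rw [hvint, hconvW, hsplit]
      have hWexp : W t z = c t * Real.exp (-t) * TEaux.GG Jm L t z := rfl
      rw [hWexp] at hFge ⊢
      beta_reduce
      linarith [hFge]
  -- the tail estimate at time T
  set k : ℕ := ⌈2*L/s⌉₊ with hkdef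
  have hks : 2*L ≤ (k:ℝ)*s := by
    have h1 := Nat.le_ceil (2*L/s)
    calc 2*L = (2*L/s)*s := by field_simp
      _ ≤ (k:ℝ)*s := mul_le_mul_of_nonneg_right h1 hs.le
  have hkub : (k:ℝ) < 2*L/s + 1 := Nat.ceil_lt_add_one (by positivity)
  have hkTp : (k:ℝ) ≤ T*p := by
    have h2 : L < Cm * Λ := hLlt
    have h3 : 2*L/s < 2*(Cm*Λ)/s := by gcongr
    have h4 : 2*(Cm*Λ)/s = Ct*p*Λ/2 := by
      rw [hCmdef]; field_simp; ring
    have h5 : 2 ≤ Ct*p*Λ := by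
      have h6 : Ct*p*(2/(Ct*p)) ≤ Ct*p*Λ := mul_le_mul_of_nonneg_left hΛge (by positivity)
      have h7 : Ct*p*(2/(Ct*p)) = 2 := by field_simp
      linarith
    have h8 : T*p = Ct*p*Λ := by rw [hTdef]; ring
    linarith
  have hpk : (k ! : ℝ) ≤ p^k * T^k := by
    calc (k ! : ℝ) ≤ ((k:ℝ))^k := by exact_mod_cast Nat.factorial_le_pow k
      _ ≤ (T*p)^k := pow_le_pow_left₀ (Nat.cast_nonneg k) hkTp k
      _ = p^k * T^k := by rw [mul_pow]; ring
  have hbk : TEaux.bb Jm L k x ≤ 1 - p^k := by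
    rcases le_total x 0 with hx | hx
    · refine TEaux.bb_tail_right hJme hJnn hJmint hJmmass hpdef hp0.le k x ?_
      linarith
    · refine TEaux.bb_tail_left hJme hJnn hJmint hJmmass
        (hpdef.trans (hsym s).symm) hp0.le k x ?_
      linarith
  have hGT : TEaux.GG Jm L T x ≤ Real.exp T - 1 := by
    have hsumb : Summable (fun n => TEaux.bb Jm L n x * T^n / n !) :=
      TEaux.ES_summable (TEaux.bb_abs_le hJme hJnn hJmint hJmmass x) T
    have hsume : Summable (fun n => T^n / (n ! : ℝ)) := Real.summable_pow_div_factorial T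
    have hdiff : Real.exp T - TEaux.GG Jm L T x
        = ∑' n : ℕ, (T^n/(n ! : ℝ) - TEaux.bb Jm L n x * T^n / n !) := by
      rw [Summable.tsum_sub hsume hsumb, ← TEaux.exp_tsum]
      rfl
    have hterm : ∀ n : ℕ, 0 ≤ T^n/(n ! : ℝ) - TEaux.bb Jm L n x * T^n / n ! := by
      intro n
      have h1 := TEaux.bb_le_one (L := L) hJme hJnn hJmint hJmmass n x
      have h2 : 0 ≤ T^n := pow_nonneg hT.le n
      have h3 : (0:ℝ) < (n ! : ℝ) := by positivity
      have h4 : TEaux.bb Jm L n x * T^n ≤ T^n := by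
        nlinarith [h1, h2, TEaux.bb_nonneg (L := L) hJnn n x]
      have h5 := div_le_div_of_nonneg_right h4 h3.le
      rw [mul_div_assoc] at h5
      rw [mul_div_assoc]
      linarith
    have hsumd : Summable (fun n : ℕ => T^n/(n ! : ℝ) - TEaux.bb Jm L n x * T^n / n !) :=
      hsume.sub hsumb
    have hsingle : T^k/(k ! : ℝ) - TEaux.bb Jm L k x * T^k / k !
        ≤ Real.exp T - TEaux.GG Jm L T x := by
      rw [hdiff]
      exact Summable.le_tsum hsumd k (fun j _ => hterm j)
    have h4 : (1:ℝ) ≤ T^k/(k ! : ℝ) - TEaux.bb Jm L k x * T^k / k ! := by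
      have hfk : (0:ℝ) < (k ! : ℝ) := by positivity
      have h5a : 0 ≤ (1 - TEaux.bb Jm L k x - p^k) * T^k :=
        mul_nonneg (by linarith [hbk]) (pow_nonneg hT.le k)
      have h5 : (k ! : ℝ) ≤ (1 - TEaux.bb Jm L k x) * T^k := by nlinarith [h5a, hpk]
      have h6 := div_le_div_of_nonneg_right h5 hfk.le
      have h7 : (k ! : ℝ)/(k ! : ℝ) = 1 := by field_simp
      have h8 : ((1 - TEaux.bb Jm L k x) * T^k)/(k ! : ℝ)
          = T^k/(k ! : ℝ) - TEaux.bb Jm L k x * T^k / k ! := by ring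
      rw [h7, h8] at h6
      exact h6
    linarith
  have hUT : Real.exp (-T) * TEaux.GG Jm L T x ≤ 1 - Real.exp (-T) := by
    have h1 : Real.exp (-T) * TEaux.GG Jm L T x ≤ Real.exp (-T) * (Real.exp T - 1) :=
      mul_le_mul_of_nonneg_left hGT (Real.exp_pos _).le
    have h2 : Real.exp (-T) * (Real.exp T - 1) = 1 - Real.exp (-T) := by
      rw [mul_sub, ← Real.exp_add]
      simp
    linarith
  have hkey : 2*ε*Real.exp ((3*rp+1)*T) ≤ θ := by
    have h1 : (3*rp+1)*T = Λ/2 := by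
      rw [hTdef, hCtdef]
      field_simp
    rw [h1]
    have hr0 : (0:ℝ) < Real.exp (Λ/2) := Real.exp_pos _
    have hr2 : Real.exp (Λ/2)^2 = 1/ε := by
      rw [sq, ← Real.exp_add, show Λ/2 + Λ/2 = Λ by ring]
      exact hexpΛ
    have hsq : (2*ε*Real.exp (Λ/2))^2 ≤ θ^2 := by
      have h2 : (2*ε*Real.exp (Λ/2))^2 = 4*ε*(ε*Real.exp (Λ/2)^2) := by ring
      rw [h2, hr2]
      have h3 : ε*(1/ε) = 1 := by field_simp
      rw [h3, mul_one]
      nlinarith [hεθ]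
    nlinarith [hsq, hr0, hθ0, mul_pos (mul_pos (show (0:ℝ) < 2 by norm_num) hε) hr0]
  have hWT : W T x ≤ θ := by
    have hcT := hc0 T
    have hWval : W T x = c T * (Real.exp (-T) * TEaux.GG Jm L T x) := by
      simp only [hWdef]; ring
    have h3 : W T x ≤ c T * (1 - Real.exp (-T)) := by
      rw [hWval]
      exact mul_le_mul_of_nonneg_left hUT hcT.le
    have hE1 : (1:ℝ) ≤ Real.exp (3*rp*T) := Real.one_le_exp (by positivity)
    have h5 : c T - θ = ε + ε*Real.exp (3*rp*T) := by simp only [hcdef]; ring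
    have h8 : Real.exp ((3*rp+1)*T) * Real.exp (-T) = Real.exp (3*rp*T) := by
      rw [← Real.exp_add]; congr 1; ring
    have h7 : 2*ε*Real.exp (3*rp*T) ≤ θ*Real.exp (-T) := by
      have h9 := mul_le_mul_of_nonneg_right hkey (Real.exp_pos (-T)).le
      calc 2*ε*Real.exp (3*rp*T)
          = 2*ε*Real.exp ((3*rp+1)*T)*Real.exp (-T) := by rw [← h8]; ring
        _ ≤ θ*Real.exp (-T) := h9
    have h6 : ε + ε*Real.exp (3*rp*T) ≤ 2*ε*Real.exp (3*rp*T) := by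
      linarith [mul_nonneg hε.le (sub_nonneg.mpr hE1)]
    have hprod : c T * (1 - Real.exp (-T)) = c T - c T * Real.exp (-T) := by ring
    have hθc : θ*Real.exp (-T) ≤ c T * Real.exp (-T) := by
      have hθle : θ ≤ c T := by
        simp only [hcdef]
        linarith [mul_pos hε (Real.exp_pos (3*rp*T))]
      exact mul_le_mul_of_nonneg_right hθle (Real.exp_pos _).le
    linarith
  have hv0T := hcomp T ⟨hT.le, le_refl T⟩ x
  have hle : w T x ≤ W T x := by
    have h1 : v T x = W T x - w T x := rfl
    linarith [hv0T]
  linarith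
end
end

section
/- Let J satisfy (K1) and be exponentially bounded: there exists λ₀ > 0 with ∫_ℝ e^{λ₀ x} J(x) dx < ∞. Fix r⁻ ∈ (0,1), θ ∈ (0,1), η ∈ (θ,1) and m ∈ (0,1), and set T_ε := (1/r⁻)·ln(2(η−θ)/ε). Then there exist a constant C⁺ > 0 (depending only on r⁻ and J) and ε₀ > 0 such that for all ε ∈ (0, ε₀) and all L ≥ L_ε := (C⁺/(1−m))·ln(1/ε), the solution w of ∂_t w = J ∗ w − w + r⁻(w − θ) with initial datum w(0,x) = (θ+ε)·1_{(−L,L)}(x) satisfies min_{|x| ≤ mL} w(T_ε, x) ≥ η. -/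
open MeasureTheory Filter Set Asymptotics

noncomputable section

/-- Abstract nonlocal comparison principle: if `z` is bounded, continuous in time,
nonnegative initially, and satisfies `∂ₜ z ≥ J ∗ z`, then `z ≥ 0` up to time `T`. -/
private lemma comparison_key
    (J : ℝ → ℝ) (hJ0 : ∀ x, 0 ≤ J x) (hJint : Integrable J) (hJmass : (∫ x, J x) = 1)
    (T B : ℝ) (hT0 : 0 < T)
    (z : ℝ → ℝ → ℝ)
    (hzcont : ∀ u, ContinuousOn (fun t => z t u) (Set.Icc 0 T))
    (hzmeas : ∀ t, 0 ≤ t → Measurable (fun u => z t u))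
    (hzbd : ∀ t ∈ Set.Icc (0:ℝ) T, ∀ u, |z t u| ≤ B)
    (hz0 : ∀ u, 0 ≤ z 0 u)
    (hzderiv : ∀ t, 0 < t → t ≤ T → ∀ u, ∃ d, HasDerivAt (fun s => z s u) d t ∧
      (∫ y, J y * z t (u - y)) ≤ d) :
    ∀ t ∈ Set.Icc (0:ℝ) T, ∀ u, 0 ≤ z t u := by
  have hintc : ∀ c : ℝ, (∫ y, J y * c) = c := by
    intro c; rw [integral_mul_const, hJmass, one_mul]
  have hkey : ∀ n : ℕ, ∀ t ∈ Set.Icc (0:ℝ) T, ∀ u,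
      -(B * t ^ n / n.factorial) ≤ z t u := by
    intro n
    induction n with
    | zero =>
      intro t ht u
      have h := (abs_le.1 (hzbd t ht u)).1
      simp only [pow_zero, Nat.factorial_zero, Nat.cast_one, mul_one, div_one]
      exact h
    | succ n ih =>
      intro t ht u
      have hGcont : ContinuousOn
          (fun s => z s u + B * s ^ (n + 1) / (n + 1).factorial) (Set.Icc 0 T) :=
        (hzcont u).add ((continuous_const.mul (continuous_pow (n+1))).div_const _).continuousOn
      have hGd : ∀ s ∈ Set.Ioo (0:ℝ) T, ∃ d,
          HasDerivAt (fun s => z s u + B * s ^ (n + 1) / (n + 1).factorial) d s ∧ 0 ≤ d := by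
        intro s hs
        obtain ⟨d, hd, hdle⟩ := hzderiv s hs.1 hs.2.le u
        have hpoly : HasDerivAt (fun s : ℝ => B * s ^ (n + 1) / (n + 1).factorial)
            (B * ((n + 1) * s ^ n) / (n + 1).factorial) s := by
          have h1 := ((hasDerivAt_pow (n + 1) s).const_mul B).div_const
            (((n + 1).factorial : ℕ) : ℝ)
          refine h1.congr_deriv ?_
          push_cast
          ring
        refine ⟨_, hd.add hpoly, ?_⟩
        have hint1 : Integrable (fun y => J y * z s (u - y)) := by
          refine (hJint.const_mul B).mono'
            (hJint.aestronglyMeasurable.mul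
              (((hzmeas s hs.1.le).comp (measurable_const.sub measurable_id)).aestronglyMeasurable)) ?_
          filter_upwards with y
          have h1 := hzbd s ⟨hs.1.le, hs.2.le⟩ (u - y)
          have h2 := hJ0 y
          rw [Real.norm_eq_abs, abs_mul, abs_of_nonneg h2]
          calc J y * |z s (u - y)| ≤ J y * B := mul_le_mul_of_nonneg_left h1 h2
            _ = B * J y := mul_comm _ _
        have hlow : -(B * s ^ n / n.factorial) ≤ ∫ y, J y * z s (u - y) := by
          have he : (∫ y, J y * (-(B * s ^ n / n.factorial))) = -(B * s ^ n / n.factorial) :=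
            hintc _
          rw [← he]
          refine integral_mono (hJint.mul_const _) hint1 fun y => ?_
          exact mul_le_mul_of_nonneg_left (ih s ⟨hs.1.le, hs.2.le⟩ (u - y)) (hJ0 y)
        have heq : B * ((n + 1) * s ^ n) / (n + 1).factorial = B * s ^ n / n.factorial := by
          rw [Nat.factorial_succ]
          push_cast
          have hnf : (0:ℝ) < n.factorial := by positivity
          field_simp
        rw [heq]
        linarith
      have hmono : MonotoneOn
          (fun s => z s u + B * s ^ (n + 1) / (n + 1).factorial) (Set.Icc 0 T) := by
        refine monotoneOn_of_deriv_nonneg (convex_Icc 0 T) hGcont ?_ ?_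
        · intro s hs
          rw [interior_Icc] at hs
          obtain ⟨d, hd, _⟩ := hGd s hs
          exact hd.differentiableAt.differentiableWithinAt
        · intro s hs
          rw [interior_Icc] at hs
          obtain ⟨d, hd, hd0⟩ := hGd s hs
          rw [hd.deriv]
          exact hd0
      have h0mem : (0:ℝ) ∈ Set.Icc (0:ℝ) T := Set.left_mem_Icc.2 hT0.le
      have hstep := hmono h0mem ht ht.1
      have hz00 := hz0 u
      simp only [zero_pow (Nat.succ_ne_zero n), mul_zero, zero_div, add_zero] at hstep
      have : 0 ≤ z t u + B * t ^ (n + 1) / (n + 1).factorial := le_trans hz00 hstep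
      linarith
  intro t ht u
  have hlim : Tendsto (fun n : ℕ => -(B * t ^ n / n.factorial)) atTop (nhds 0) := by
    have h1 := (FloorSemiring.tendsto_pow_div_factorial_atTop (t : ℝ)).const_mul B
    have h2 : (fun n : ℕ => B * (t ^ n / n.factorial)) = fun n : ℕ => B * t ^ n / n.factorial := by
      funext n; ring
    rw [h2] at h1
    simpa using h1.neg
  exact le_of_tendsto hlim (Filter.Eventually.of_forall fun n => hkey n t ht u)


private lemma minexp_aux {a b c : ℝ} (hc : 1 ≤ c) (hab : a ≤ c * b) :
    min 1 a ≤ c * min 1 b := by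
  rw [mul_min_of_nonneg _ _ (by linarith : (0:ℝ) ≤ c), mul_one]
  exact le_min (le_trans (min_le_left _ _) hc) (le_trans (min_le_right _ _) hab)


set_option maxHeartbeats 4000000

/-- **Corollary (Asymptotic non-extinction criterion, exponentially bounded kernels).**
Under (K1), `∫ e^{λ₀ x} J(x) dx < ∞` for some `λ₀ > 0`, and `r⁻ ∈ (0,1)`, there are
`C⁺ > 0` and `ε₀ > 0` such that for all `ε ∈ (0, ε₀)` and all
`L ≥ L_ε = (C⁺/(1-m)) ln(1/ε)`, the solution of `∂ₜ w = J ∗ w - w + r⁻(w-θ)` starting from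
`(θ+ε) 1_{(-L,L)}` satisfies `w(T_ε,x) ≥ η` for all `|x| ≤ mL`, where
`T_ε = (1/r⁻) ln(2(η-θ)/ε)`. -/
theorem toy_asymptotic_nonextinction_exponential
    (J : ℝ → ℝ) (rm θ η m lam0 : ℝ)
    (hK1 : K1 J)
    (hlam0 : 0 < lam0)
    (hexp : Integrable (fun x => Real.exp (lam0 * x) * J x))
    (hrm : 0 < rm) (hrm1 : rm < 1) (hθ : θ ∈ Set.Ioo (0:ℝ) 1)
    (hη : η ∈ Set.Ioo θ 1) (hm : m ∈ Set.Ioo (0:ℝ) 1) :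
    ∃ Cp > 0, ∃ ε₀ > 0, ∀ ε, 0 < ε → ε < ε₀ → ∀ L,
      (Cp / (1 - m)) * Real.log (1/ε) ≤ L →
      ∀ w, IsBddSol J (fun v => rm * (v - θ)) (stepInit (θ + ε) L) w →
        ∀ x, |x| ≤ m * L → η ≤ w ((1/rm) * Real.log (2*(η-θ)/ε)) x := by
  obtain ⟨hJ0, hJe, hJint, hJmass⟩ := hK1
  obtain ⟨hθ0, hθ1⟩ := hθ
  obtain ⟨hηθ, hη1⟩ := hη
  obtain ⟨hm0, hm1⟩ := hm
  -- integrability of exp(lam0|y|) * J y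
  have hJexp : Integrable (fun y => Real.exp (lam0 * |y|) * J y) := by
    have h2 : Integrable (fun y : ℝ => Real.exp (lam0 * (-y)) * J y) := by
      have := hexp.comp_neg
      simpa [hJe] using this
    have h1 : Integrable (fun y => Real.exp (lam0 * y) * J y + Real.exp (lam0 * (-y)) * J y) :=
      hexp.add h2
    refine h1.mono' ?_ ?_
    · exact ((Real.continuous_exp.comp
        (continuous_const.mul continuous_abs)).aestronglyMeasurable).mul
        hJint.aestronglyMeasurable
    · filter_upwards with y
      have hJy := hJ0 y
      rw [Real.norm_eq_abs, abs_of_nonneg (by positivity)]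
      rcases abs_cases y with ⟨h, _⟩ | ⟨h, _⟩ <;> rw [h] <;>
        linarith [mul_nonneg (Real.exp_pos (lam0 * y)).le hJy,
          mul_nonneg (Real.exp_pos (lam0 * (-y))).le hJy]
  set M : ℝ := ∫ y, Real.exp (lam0 * |y|) * J y with hMdef
  have hM1 : 1 ≤ M := by
    rw [← hJmass]
    refine integral_mono hJint hJexp fun y => ?_
    have h1 : 1 * J y ≤ Real.exp (lam0 * |y|) * J y :=
      mul_le_mul_of_nonneg_right (Real.one_le_exp_iff.2 (by positivity)) (hJ0 y)
    linarith
  set κ : ℝ := M - 1 + rm with hκdef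
  have hκpos : 0 < κ := by simp only [hκdef]; linarith
  set Cp : ℝ := (κ + rm) / (rm * lam0) with hCpdef
  have hCp : 0 < Cp := div_pos (by linarith) (by positivity)
  set τ : ℝ := 2 * (η - θ) with hτdef
  have hτ0 : 0 < τ := by simp only [hτdef]; linarith
  have hτp : 0 < τ ^ (κ / rm) := Real.rpow_pos_of_pos hτ0 _
  set ε₀ : ℝ := min (η - θ) ((η - θ) / (2 * τ ^ (κ / rm))) with hε₀def
  have hε₀pos : 0 < ε₀ := lt_min (by linarith) (div_pos (by linarith) (mul_pos two_pos hτp))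
  refine ⟨Cp, hCp, ε₀, hε₀pos, ?_⟩
  intro ε hε hεε₀ L hL w hw x hx
  have hε1 : ε < η - θ := lt_of_lt_of_le hεε₀ (min_le_left _ _)
  have hε2 : ε < (η - θ) / (2 * τ ^ (κ / rm)) := lt_of_lt_of_le hεε₀ (min_le_right _ _)
  have hεlt1 : ε < 1 := by linarith
  have hlogε : 0 < Real.log (1/ε) := Real.log_pos (by rw [lt_div_iff₀ hε]; linarith)
  have hL0 : 0 < L := lt_of_lt_of_le (mul_pos (div_pos hCp (by linarith)) hlogε) hL
  set T : ℝ := 1 / rm * Real.log (τ / ε) with hTdef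
  have hτε1 : 1 < τ / ε := by rw [lt_div_iff₀ hε]; simp only [hτdef]; linarith
  have hT0 : 0 < T := mul_pos (by rw [one_div]; exact inv_pos.2 hrm) (Real.log_pos hτε1)
  -- the auxiliary profile g
  set g : ℝ → ℝ := fun u => min 1 (Real.exp (lam0 * (|u| - L))) with hgdef
  have hg0 : ∀ u, 0 ≤ g u := fun u => le_min zero_le_one (Real.exp_pos _).le
  have hg1 : ∀ u, g u ≤ 1 := fun u => min_le_left _ _
  have hgcont : Continuous g := continuous_const.min
    (Real.continuous_exp.comp (continuous_const.mul (continuous_abs.sub continuous_const)))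
  have hgpt : ∀ u y : ℝ, g (u - y) ≤ Real.exp (lam0 * |y|) * g u := by
    intro u y
    refine minexp_aux (Real.one_le_exp_iff.2 (by positivity)) ?_
    rw [← Real.exp_add]
    refine Real.exp_le_exp.2 ?_
    have h1 : |u - y| ≤ |u| + |y| := abs_sub u y
    linarith [mul_le_mul_of_nonneg_left h1 hlam0.le]
  -- integrability helper
  have hibdd : ∀ (h : ℝ → ℝ), Measurable h → ∀ (C : ℝ), (∀ v, |h v| ≤ C) →
      ∀ u, Integrable (fun y => J y * h (u - y)) := by
    intro h hh C hC u
    refine (hJint.const_mul C).mono'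
      (hJint.aestronglyMeasurable.mul
        ((hh.comp (measurable_const.sub measurable_id)).aestronglyMeasurable)) ?_
    filter_upwards with y
    have h1 := hC (u - y)
    have h2 := hJ0 y
    rw [Real.norm_eq_abs, abs_mul, abs_of_nonneg h2]
    calc J y * |h (u - y)| ≤ J y * C := mul_le_mul_of_nonneg_left h1 h2
      _ = C * J y := mul_comm _ _
  have hintc : ∀ c : ℝ, (∫ y, J y * c) = c := by
    intro c; rw [integral_mul_const, hJmass, one_mul]
  have hgint : ∀ u, Integrable (fun y => J y * g (u - y)) :=
    hibdd g hgcont.measurable 1 (fun v => abs_le.2 ⟨by linarith [hg0 v], hg1 v⟩)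
  have hgconv : ∀ u, (∫ y, J y * g (u - y)) ≤ M * g u := by
    intro u
    have : (∫ y, Real.exp (lam0 * |y|) * J y * g u) = M * g u := by
      rw [integral_mul_const]
    rw [← this]
    refine integral_mono (hgint u) (hJexp.mul_const _) fun y => ?_
    have h1 := hgpt u y
    have h2 := hJ0 y
    calc J y * g (u - y) ≤ J y * (Real.exp (lam0 * |y|) * g u) :=
          mul_le_mul_of_nonneg_left h1 h2
      _ = Real.exp (lam0 * |y|) * J y * g u := by ring
  -- the subsolution ψ and comparison
  set ψ : ℝ → ℝ → ℝ := fun t u => θ + ε * Real.exp (rm * t) - 2 * Real.exp (κ * t) * g u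
    with hψdef
  obtain ⟨⟨Mw, hMw⟩, hwmeas, hwcont, hwinit, hwderiv⟩ := hw
  have hMw0 : 0 ≤ Mw := le_trans (abs_nonneg _) (hMw 0 0 le_rfl)
  -- initial comparison
  have hinit0 : ∀ u, ψ 0 u ≤ w 0 u := by
    intro u
    rw [hwinit]
    simp only [hψdef, stepInit, mul_zero, Real.exp_zero, mul_one]
    by_cases hu : u ∈ Set.Ioo (-L) L
    · rw [Set.indicator_of_mem hu]
      linarith [hg0 u]
    · rw [Set.indicator_of_notMem hu]
      have hLu : L ≤ |u| := by
        simp only [Set.mem_Ioo, not_and_or, not_lt] at hu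
        rcases hu with h | h
        · rw [abs_of_nonpos (by linarith)]; linarith
        · rw [abs_of_nonneg (by linarith)]; exact h
      have hgu : g u = 1 := min_eq_left (Real.one_le_exp_iff.2
        (mul_nonneg hlam0.le (by linarith)))
      rw [hgu]
      linarith
  -- continuity of ψ in time
  have hψcont : ∀ u, Continuous (fun t => ψ t u) := by
    intro u
    simp only [hψdef]
    continuity
  -- bound for ψ on [0,T]
  set Ψb : ℝ := θ + ε * Real.exp (rm * T) + 2 * Real.exp (κ * T) with hΨbdef
  have hψbdd : ∀ t ∈ Set.Icc (0:ℝ) T, ∀ u, |ψ t u| ≤ Ψb := by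
    intro t ht u
    have h1 : Real.exp (rm * t) ≤ Real.exp (rm * T) :=
      Real.exp_le_exp.2 (by nlinarith [ht.2])
    have h2 : Real.exp (κ * t) ≤ Real.exp (κ * T) :=
      Real.exp_le_exp.2 (by nlinarith [ht.2])
    have h3 := Real.exp_pos (rm * t)
    have h4 := Real.exp_pos (κ * t)
    have h5 := hg0 u
    have h6 := hg1 u
    have p1 : ε * Real.exp (rm * t) ≤ ε * Real.exp (rm * T) :=
      mul_le_mul_of_nonneg_left h1 hε.le
    have p2 : 2 * Real.exp (κ * t) * g u ≤ 2 * Real.exp (κ * T) := by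
      have q1 : 2 * Real.exp (κ * t) * g u ≤ 2 * Real.exp (κ * t) * 1 :=
        mul_le_mul_of_nonneg_left h6 (by positivity)
      linarith
    have p3 : 0 ≤ ε * Real.exp (rm * t) := by positivity
    have p4 : 0 ≤ 2 * Real.exp (κ * t) * g u := mul_nonneg (by positivity) h5
    simp only [hψdef, hΨbdef]
    rw [abs_le]
    constructor <;> linarith
  set B : ℝ := Real.exp ((1 - rm) * T) * (Mw + Ψb) with hBdef
  have hΨb0 : 0 ≤ Ψb := le_trans (abs_nonneg _) (hψbdd 0 ⟨le_rfl, hT0.le⟩ 0)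
  have hB0 : 0 ≤ B := by positivity
  set z : ℝ → ℝ → ℝ := fun t u => Real.exp ((1 - rm) * t) * (w t u - ψ t u) with hzdef
  have hzbd : ∀ t ∈ Set.Icc (0:ℝ) T, ∀ u, |z t u| ≤ B := by
    intro t ht u
    have h1 : Real.exp ((1 - rm) * t) ≤ Real.exp ((1 - rm) * T) :=
      Real.exp_le_exp.2 (by nlinarith [ht.2])
    have h2 := hMw t u ht.1
    have h3 := hψbdd t ht u
    have h4 := Real.exp_pos ((1 - rm) * t)
    simp only [hzdef, hBdef]
    rw [abs_mul, abs_of_nonneg h4.le]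
    have h5 : |w t u - ψ t u| ≤ Mw + Ψb :=
      le_trans (abs_sub _ _) (add_le_add h2 h3)
    exact mul_le_mul h1 h5 (abs_nonneg _) (Real.exp_pos _).le
  have hzmeas : ∀ t, 0 ≤ t → Measurable (fun u => z t u) := by
    intro t ht
    simp only [hzdef, hψdef]
    exact measurable_const.mul ((hwmeas t ht).sub
      ((measurable_const.sub (measurable_const.mul hgcont.measurable)) ))
  have hψmeas : ∀ t, Measurable (fun v => ψ t v) := by
    intro t
    simp only [hψdef]
    exact measurable_const.sub (measurable_const.mul hgcont.measurable)
  clear_value z B Ψb ψ T ε₀ Cp κ M τ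
  -- derivative inequality for z
  have hzderiv : ∀ t, 0 < t → t ≤ T → ∀ u, ∃ d, HasDerivAt (fun s => z s u) d t ∧
      (∫ y, J y * z t (u - y)) ≤ d := by
    intro t ht htT u
    have hw' := hwderiv t u ht
    -- derivative of ψ
    have hψ' : HasDerivAt (fun s => ψ s u)
        (ε * (rm * Real.exp (rm * t)) - 2 * (κ * Real.exp (κ * t)) * g u) t := by
      have e1 : HasDerivAt (fun s : ℝ => Real.exp (rm * s)) (Real.exp (rm * t) * rm) t := by
        simpa using ((hasDerivAt_id t).const_mul rm).exp
      have e2 : HasDerivAt (fun s : ℝ => Real.exp (κ * s)) (Real.exp (κ * t) * κ) t := by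
        simpa using ((hasDerivAt_id t).const_mul κ).exp
      have h5 := ((e1.const_mul ε).const_add θ).sub ((e2.const_mul 2).mul_const (g u))
      simp only [hψdef]
      refine h5.congr_deriv ?_
      ring
    have hz' : HasDerivAt (fun s => z s u)
        ((1 - rm) * Real.exp ((1 - rm) * t) * (w t u - ψ t u) +
          Real.exp ((1 - rm) * t) *
            (((∫ y, J y * (w t (u - y) - w t u)) + rm * (w t u - θ)) -
              (ε * (rm * Real.exp (rm * t)) - 2 * (κ * Real.exp (κ * t)) * g u))) t := by
      have e3 : HasDerivAt (fun s : ℝ => Real.exp ((1 - rm) * s))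
          (Real.exp ((1 - rm) * t) * (1 - rm)) t := by
        simpa using ((hasDerivAt_id t).const_mul (1 - rm)).exp
      have h6 := e3.mul (hw'.sub hψ')
      simp only [hzdef]
      refine h6.congr_deriv ?_
      simp only [Pi.sub_apply]
      ring
    refine ⟨_, hz', ?_⟩
    -- now the integral inequality
    have hwIntu : Integrable (fun y => J y * w t (u - y)) :=
      hibdd _ (hwmeas t ht.le) Mw (fun v => hMw t v ht.le) u
    have hψIntu : Integrable (fun y => J y * ψ t (u - y)) :=
      hibdd _ (hψmeas t) Ψb (fun v => hψbdd t ⟨ht.le, htT⟩ v) u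
    have hwItu : (∫ y, J y * (w t (u - y) - w t u)) =
        (∫ y, J y * w t (u - y)) - w t u := by
      have : (fun y => J y * (w t (u - y) - w t u)) =
          fun y => J y * w t (u - y) - J y * w t u := by
        funext y; ring
      rw [this, integral_sub hwIntu (hJint.mul_const _), hintc]
    have hψItu : (∫ y, J y * ψ t (u - y)) =
        (θ + ε * Real.exp (rm * t)) - 2 * Real.exp (κ * t) * (∫ y, J y * g (u - y)) := by
      have : (fun y => J y * ψ t (u - y)) =
          fun y => J y * (θ + ε * Real.exp (rm * t)) -
            (2 * Real.exp (κ * t)) * (J y * g (u - y)) := by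
        funext y; simp only [hψdef]; ring
      rw [this, integral_sub (hJint.mul_const _) ((hgint u).const_mul _), hintc,
        integral_const_mul]
    have hzItu : (∫ y, J y * z t (u - y)) =
        Real.exp ((1 - rm) * t) * ((∫ y, J y * w t (u - y)) - (∫ y, J y * ψ t (u - y))) := by
      have : (fun y => J y * z t (u - y)) =
          fun y => Real.exp ((1 - rm) * t) * (J y * w t (u - y) - J y * ψ t (u - y)) := by
        funext y; simp only [hzdef]; ring
      rw [this, integral_const_mul, integral_sub hwIntu hψIntu]
    rw [hzItu, hwItu, hψItu]
    have hgc := hgconv u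
    have hE := (Real.exp_pos (κ * t)).le
    have hE2 := (Real.exp_pos ((1 - rm) * t)).le
    have key : (∫ y, J y * w t (u - y)) -
        ((θ + ε * Real.exp (rm * t)) - 2 * Real.exp (κ * t) * (∫ y, J y * g (u - y))) ≤
        (1 - rm) * (w t u - ψ t u) +
          ((((∫ y, J y * w t (u - y)) - w t u) + rm * (w t u - θ)) -
            (ε * (rm * Real.exp (rm * t)) - 2 * (κ * Real.exp (κ * t)) * g u)) := by
      have h3 : (0:ℝ) ≤ 2 * Real.exp (κ * t) := by positivity
      have h4 : κ * (Real.exp (κ * t) * g u) = (M - 1 + rm) * (Real.exp (κ * t) * g u) := by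
        rw [hκdef]
      simp only [hψdef]
      linarith [mul_le_mul_of_nonneg_left hgc h3, h4]
    linarith [mul_le_mul_of_nonneg_left key hE2]
  -- continuity of z in time on [0,T]
  have hzcont : ∀ u, ContinuousOn (fun t => z t u) (Set.Icc 0 T) := by
    intro u
    simp only [hzdef]
    exact ((Real.continuous_exp.comp (continuous_const.mul continuous_id)).continuousOn).mul
      (((hwcont u).mono (fun s hs => hs.1)).sub (hψcont u).continuousOn)
  -- apply the abstract comparison principle
  have hz0 : ∀ u, 0 ≤ z 0 u := by
    intro u
    have h1 := hinit0 u
    have h2 : z 0 u = Real.exp ((1 - rm) * 0) * (w 0 u - ψ 0 u) := by rw [hzdef]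
    rw [h2, mul_zero, Real.exp_zero, one_mul]
    linarith
  have hzpos : ∀ u, 0 ≤ z T u :=
    comparison_key J hJ0 hJint hJmass T B hT0 z hzcont hzmeas hzbd hz0 hzderiv T
      ⟨hT0.le, le_rfl⟩
  have hwψ : ψ T x ≤ w T x := by
    have h9 := hzpos x
    simp only [hzdef] at h9
    have h8 := (mul_nonneg_iff_of_pos_left (Real.exp_pos ((1 - rm) * T))).1 h9
    linarith
  -- final numeric computation
  have hεeT : ε * Real.exp (rm * T) = τ := by
    have : rm * T = Real.log (τ / ε) := by
      simp only [hTdef]; field_simp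
    rw [this, Real.exp_log (by positivity)]
    field_simp
  have hgx : g x ≤ Real.exp (-(lam0 * (1 - m) * L)) := by
    rw [hgdef]
    refine le_trans (min_le_right _ _) (Real.exp_le_exp.2 ?_)
    linarith [mul_le_mul_of_nonneg_left hx hlam0.le]
  have hexpbd : 2 * Real.exp (κ * T) * g x ≤ η - θ := by
    have hκT : κ * T = (κ / rm) * (Real.log τ - Real.log ε) := by
      simp only [hTdef]
      rw [Real.log_div (by positivity) (by positivity)]
      field_simp
    have hlogε' : Real.log (1 / ε) = -Real.log ε := by
      rw [one_div, Real.log_inv]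
    have hLlow : (κ / rm + 1) * (-Real.log ε) ≤ lam0 * (1 - m) * L := by
      have h1 : lam0 * (1 - m) * (Cp / (1 - m) * Real.log (1 / ε)) ≤ lam0 * (1 - m) * L :=
        mul_le_mul_of_nonneg_left hL (mul_nonneg hlam0.le (by linarith))
      have h2 : lam0 * (1 - m) * (Cp / (1 - m) * Real.log (1 / ε)) =
          (κ / rm + 1) * (-Real.log ε) := by
        have h1m : (1:ℝ) - m ≠ 0 := by linarith
        have hrm' : rm ≠ 0 := ne_of_gt hrm
        have hlam' : lam0 ≠ 0 := ne_of_gt hlam0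
        rw [hlogε', hCpdef]
        field_simp
      linarith [h1, h2 ▸ h1]
    have hexple : κ * T - lam0 * (1 - m) * L ≤ (κ / rm) * Real.log τ + Real.log ε := by
      rw [hκT]
      have : (κ / rm) * (Real.log τ - Real.log ε) =
          (κ / rm) * Real.log τ + (κ / rm) * (-Real.log ε) := by ring
      linarith [hLlow, this ▸ le_refl ((κ / rm) * (Real.log τ - Real.log ε))]
    have hfinal : Real.exp (κ * T) * Real.exp (-(lam0 * (1 - m) * L)) ≤
        τ ^ (κ / rm) * ε := by
      rw [← Real.exp_add]
      have : τ ^ (κ / rm) * ε = Real.exp ((κ / rm) * Real.log τ + Real.log ε) := by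
        rw [Real.exp_add, Real.exp_log hε, Real.rpow_def_of_pos hτ0]
        ring_nf
      rw [this]
      exact Real.exp_le_exp.2 (by linarith)
    have hεb : 2 * (τ ^ (κ / rm) * ε) ≤ η - θ := by
      have h7 := (lt_div_iff₀ (mul_pos two_pos hτp)).1 hε2
      linarith [h7]
    linarith [mul_le_mul_of_nonneg_left hgx
      (by positivity : (0:ℝ) ≤ 2 * Real.exp (κ * T)), hfinal, hεb]
  have : ψ T x = θ + τ - 2 * Real.exp (κ * T) * g x := by
    simp only [hψdef]
    rw [hεeT]
  rw [this] at hwψ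
  simp only [hτdef] at hwψ
  linarith
end
end

section
/- Let J satisfy (K1). Assume 0 < r⁻ < 1 and select γ⁻ ∈ (0,1) such that γ⁻·ln(e/γ⁻) < 1 − r⁻. Define M(t) := ⌊γ⁻ t⌋ and N(t) := ⌊3t⌋ + 1. Then e^{−t}·∑_{i=1}^∞ (t^i/i!)·R_i((1−m)L) − e^{−t}·∑_{i=M(t)}^{N(t)} (t^i/i!)·R_i((1−m)L) = o(e^{−r⁻ t}) as t → ∞, uniformly with respect to m ∈ (0,1) and L > 0; that is, sup_{m∈(0,1), L>0} e^{r⁻ t}·|e^{−t}·∑_{i∉[M(t),N(t)]} (t^i/i!)·R_i((1−m)L)| → 0 as t → ∞. -/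
open MeasureTheory Filter Set Asymptotics

noncomputable section

/-! ### Auxiliary lemmas -/

lemma convIter_succ_eq (J : ℝ → ℝ) (n : ℕ) :
    convIter J (n+1) = convolution J (convIter J n) (ContinuousLinearMap.mul ℝ ℝ) volume := by
  ext x
  simp [convIter, convolution, ContinuousLinearMap.mul_apply']

lemma convIter_nonneg {J : ℝ → ℝ} (hJ : ∀ x, 0 ≤ J x) (n : ℕ) : ∀ x, 0 ≤ convIter J n x := by
  induction n with
  | zero => exact hJ
  | succ n ih =>
    intro x
    simp only [convIter]
    exact integral_nonneg fun y => mul_nonneg (hJ y) (ih _)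

lemma convIter_integrable {J : ℝ → ℝ} (hJ : Integrable J) (n : ℕ) :
    Integrable (convIter J n) := by
  induction n with
  | zero => exact hJ
  | succ n ih =>
    rw [convIter_succ_eq]
    exact hJ.integrable_convolution _ ih

lemma convIter_integral {J : ℝ → ℝ} (hJ : Integrable J) (hJ1 : (∫ x, J x) = 1) (n : ℕ) :
    (∫ x, convIter J n x) = 1 := by
  induction n with
  | zero => exact hJ1
  | succ n ih =>
    rw [convIter_succ_eq]
    rw [integral_convolution _ hJ (convIter_integrable hJ n)]
    simp [hJ1, ih]

lemma tailR_nonneg {J : ℝ → ℝ} (hJ : ∀ x, 0 ≤ J x) (n : ℕ) (L : ℝ) : 0 ≤ tailR J n L :=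
  setIntegral_nonneg (by
    have : {x : ℝ | L ≤ |x|} = (fun x : ℝ => |x|) ⁻¹' (Ici L) := rfl
    rw [this]
    exact measurableSet_preimage measurable_norm measurableSet_Ici)
    fun x _ => convIter_nonneg hJ n x

lemma tailR_le_one {J : ℝ → ℝ} (hK1 : K1 J) (n : ℕ) (L : ℝ) : tailR J n L ≤ 1 := by
  obtain ⟨h0, _, hint, h1⟩ := hK1
  calc tailR J n L ≤ ∫ x, convIter J n x :=
        setIntegral_le_integral (convIter_integrable hint n)
          (Filter.Eventually.of_forall (convIter_nonneg h0 n))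
    _ = 1 := convIter_integral hint h1 n

lemma pow_div_fact_step {t : ℝ} {j : ℕ} (hj : (j:ℝ) + 1 ≤ t) :
    t ^ j / (Nat.factorial j : ℝ) ≤ t ^ (j+1) / (Nat.factorial (j+1) : ℝ) := by
  have ht : 0 < t := lt_of_lt_of_le (by positivity) hj
  rw [pow_succ, Nat.factorial_succ]
  push_cast
  rw [div_le_div_iff₀ (by positivity) (by positivity)]
  have h1 : (0:ℝ) < Nat.factorial j := by positivity
  nlinarith [pow_pos ht j, mul_le_mul_of_nonneg_left hj (le_of_lt (mul_pos (pow_pos ht j) h1))]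

lemma pow_div_fact_mono {t : ℝ} :
    ∀ j i : ℕ, i ≤ j → (j : ℝ) ≤ t →
      t ^ i / (Nat.factorial i : ℝ) ≤ t ^ j / (Nat.factorial j : ℝ) := by
  intro j
  induction j with
  | zero => intro i hi _; interval_cases i; simp
  | succ j ih =>
    intro i hi hjt
    rcases Nat.lt_succ_iff_lt_or_eq.mp (Nat.lt_succ_of_le hi) with h | h
    · have h1 : (j : ℝ) ≤ t := le_trans (by push_cast; linarith) hjt
      refine le_trans (ih i (Nat.lt_succ_iff.mp h) h1) (pow_div_fact_step ?_)
      push_cast at hjt ⊢; linarith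
    · rw [h]

lemma pow_div_fact_geom {t : ℝ} (ht : 0 ≤ t) {N : ℕ} (h3 : 3 * t ≤ N) :
    ∀ k : ℕ, t ^ (N + k) / (Nat.factorial (N + k) : ℝ) ≤
      t ^ N / (Nat.factorial N : ℝ) * (1 / 3) ^ k := by
  intro k
  induction k with
  | zero => simp
  | succ k ih =>
    have hfpos : (0:ℝ) < Nat.factorial (N + k) := by positivity
    have hkey : t ^ (N + (k+1)) / (Nat.factorial (N + (k+1)) : ℝ) =
        t ^ (N + k) / (Nat.factorial (N + k) : ℝ) * (t / (N + k + 1)) := by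
      have hf : ((N+(k+1)).factorial : ℝ) = ((N+k).factorial : ℝ) * ((N:ℝ)+k+1) := by
        rw [← Nat.add_assoc, Nat.factorial_succ]; push_cast; ring
      rw [hf, ← Nat.add_assoc, pow_succ, div_mul_div_comm]
    rw [hkey]
    have hb : t / ((N : ℝ) + k + 1) ≤ 1/3 := by
      rw [div_le_div_iff₀ (by positivity) (by norm_num)]
      nlinarith [Nat.cast_nonneg (α := ℝ) k]
    calc t ^ (N + k) / (Nat.factorial (N + k) : ℝ) * (t / (N + k + 1))
        ≤ t ^ N / (Nat.factorial N : ℝ) * (1/3) ^ k * (1/3) := by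
          apply mul_le_mul ih hb (by positivity)
          positivity
      _ = t ^ N / (Nat.factorial N : ℝ) * (1/3) ^ (k+1) := by ring

lemma pow_div_fact_le_exp_pow {t : ℝ} (ht : 0 ≤ t) {n : ℕ} (hn : 1 ≤ n) :
    t ^ n / (Nat.factorial n : ℝ) ≤ (Real.exp 1 * t / n) ^ n := by
  have hn0 : (0:ℝ) < n := by exact_mod_cast hn
  have key : (n:ℝ) ^ n / (Nat.factorial n : ℝ) ≤ Real.exp n := by
    calc (n:ℝ) ^ n / (Nat.factorial n : ℝ)
        ≤ ∑ i ∈ Finset.range (n+1), (n:ℝ) ^ i / (Nat.factorial i : ℝ) := by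
          refine Finset.single_le_sum (f := fun i => (n:ℝ)^i / (Nat.factorial i : ℝ))
            (fun i _ => by positivity) (Finset.self_mem_range_succ n)
      _ ≤ Real.exp n := Real.sum_le_exp_of_nonneg (by positivity) _
  have hfac : (0:ℝ) < Nat.factorial n := by positivity
  have h1 : 1 / (Nat.factorial n : ℝ) ≤ Real.exp n / (n:ℝ)^n := by
    rw [div_le_div_iff₀ hfac (by positivity)]
    rw [div_le_iff₀ hfac] at key
    linarith
  have hexp : Real.exp (n:ℝ) = (Real.exp 1) ^ n := by
    rw [← Real.exp_nat_mul]; ring_nf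
  calc t ^ n / (Nat.factorial n : ℝ) = t^n * (1 / (Nat.factorial n : ℝ)) := by ring
    _ ≤ t^n * (Real.exp n / (n:ℝ)^n) := by
        apply mul_le_mul_of_nonneg_left h1 (by positivity)
    _ = (Real.exp 1 * t / n) ^ n := by
        rw [hexp, div_pow, mul_pow]; ring

lemma Ebound_tendsto {rm γ : ℝ} (hrm1 : rm < 1) (hγ : 0 < γ) (hγ1 : γ < 1)
    (hγrm : γ * Real.log (Real.exp 1 / γ) < 1 - rm) :
    Tendsto (fun t : ℝ => Real.exp ((rm-1)*t) *
      (γ*t * Real.exp (γ*t * Real.log (Real.exp 1 * t / (γ*t-1))) +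
       (3/2) * Real.exp (3*t*(1-Real.log 3)))) atTop (nhds 0) := by
  have hlog3 : 1 < Real.log 3 := by
    rw [Real.lt_log_iff_exp_lt (by norm_num)]
    exact lt_trans Real.exp_one_lt_d9 (by norm_num)
  -- second piece tends to 0
  have h2 : Tendsto (fun t : ℝ =>
      Real.exp ((rm-1)*t) * ((3/2) * Real.exp (3*t*(1-Real.log 3)))) atTop (nhds 0) := by
    have heq : ∀ t : ℝ, Real.exp ((rm-1)*t) * ((3/2) * Real.exp (3*t*(1-Real.log 3)))
        = (3/2) * Real.exp (((rm-1) + 3*(1-Real.log 3)) * t) := by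
      intro t
      rw [show ((rm-1) + 3*(1-Real.log 3)) * t = (rm-1)*t + 3*t*(1-Real.log 3) by ring,
        Real.exp_add]
      ring
    simp only [heq]
    have hc : (rm-1) + 3*(1-Real.log 3) < 0 := by linarith
    have hbot : Tendsto (fun t : ℝ => ((rm-1) + 3*(1-Real.log 3)) * t) atTop atBot :=
      tendsto_id.const_mul_atTop_of_neg hc
    have := Real.tendsto_exp_atBot.comp hbot
    simpa using this.const_mul (3/2)
  -- first piece tends to 0
  have h1 : Tendsto (fun t : ℝ =>
      Real.exp ((rm-1)*t) * (γ*t * Real.exp (γ*t * Real.log (Real.exp 1 * t / (γ*t-1)))))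
      atTop (nhds 0) := by
    set q : ℝ := rm - 1 + γ * Real.log (Real.exp 1 / γ) with hq
    have hqneg : q < 0 := by rw [hq]; linarith
    -- the base tends to e/γ
    have hbase : Tendsto (fun t : ℝ => Real.exp 1 * t / (γ*t-1)) atTop
        (nhds (Real.exp 1 / γ)) := by
      have heq : (fun t : ℝ => Real.exp 1 / (γ - t⁻¹)) =ᶠ[atTop]
          (fun t : ℝ => Real.exp 1 * t / (γ*t-1)) := by
        filter_upwards [eventually_gt_atTop (0:ℝ)] with t ht
        rw [show γ - t⁻¹ = (γ*t-1)/t by field_simp, div_div_eq_mul_div]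
      have hlim : Tendsto (fun t : ℝ => Real.exp 1 / (γ - t⁻¹)) atTop
          (nhds (Real.exp 1 / γ)) := by
        have : Tendsto (fun t : ℝ => γ - t⁻¹) atTop (nhds (γ - 0)) :=
          tendsto_const_nhds.sub tendsto_inv_atTop_zero
        exact tendsto_const_nhds.div (by simpa using this) (by positivity)
      exact hlim.congr' heq
    have hlogb : Tendsto (fun t : ℝ => rm - 1 + γ * Real.log (Real.exp 1 * t / (γ*t-1)))
        atTop (nhds q) := by
      rw [hq]
      exact tendsto_const_nhds.add
        (((Real.continuousAt_log (by positivity)).tendsto.comp hbase).const_mul γ)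
    have hev1 : ∀ᶠ t : ℝ in atTop, rm - 1 + γ * Real.log (Real.exp 1 * t / (γ*t-1)) ≤ q/2 :=
      hlogb.eventually_le_const (by linarith)
    have hev2 : ∀ᶠ t : ℝ in atTop, Real.log (γ*t) ≤ (-q/4) * t := by
      have hb := Real.isLittleO_log_id_atTop.bound (show (0:ℝ) < -q/4 by linarith)
      filter_upwards [hb, eventually_ge_atTop (1:ℝ)] with t h1t h2t
      have : Real.log (γ*t) ≤ Real.log t := by
        apply Real.log_le_log (by positivity)
        nlinarith
      calc Real.log (γ*t) ≤ Real.log t := this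
        _ ≤ |Real.log t| := le_abs_self _
        _ ≤ (-q/4) * |t| := by simpa [Real.norm_eq_abs] using h1t
        _ = (-q/4) * t := by rw [abs_of_pos (by linarith)]
    apply squeeze_zero' (g := fun t : ℝ => Real.exp ((q/4) * t))
    · filter_upwards [eventually_ge_atTop (1:ℝ)] with t ht
      positivity
    · filter_upwards [hev1, hev2, eventually_ge_atTop (1:ℝ)] with t h1t h2t ht
      have hγt : 0 < γ * t := by positivity
      have key : Real.exp ((rm-1)*t) * (γ*t * Real.exp (γ*t * Real.log (Real.exp 1 * t / (γ*t-1))))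
          = Real.exp (Real.log (γ*t) + ((rm-1)*t + γ*t * Real.log (Real.exp 1 * t / (γ*t-1)))) := by
        rw [Real.exp_add, Real.exp_add, Real.exp_log hγt]
        ring
      rw [key]
      apply Real.exp_le_exp.mpr
      have hbr : (rm-1)*t + γ*t * Real.log (Real.exp 1 * t / (γ*t-1))
          = t * (rm - 1 + γ * Real.log (Real.exp 1 * t / (γ*t-1))) := by ring
      have ht0 : (0:ℝ) ≤ t := by linarith
      have : t * (rm - 1 + γ * Real.log (Real.exp 1 * t / (γ*t-1))) ≤ t * (q/2) :=
        mul_le_mul_of_nonneg_left h1t ht0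
      rw [hbr]
      linarith
    · have hbot : Tendsto (fun t : ℝ => (q/4) * t) atTop atBot :=
        tendsto_id.const_mul_atTop_of_neg (by linarith)
      exact Real.tendsto_exp_atBot.comp hbot
  have := h1.add h2
  simp only [add_zero] at this
  refine this.congr fun t => ?_
  ring

set_option maxHeartbeats 2000000 in
/-- **Lemma (Middle part of the series dominates).** Under (K1), if `0 < r⁻ < 1` and
`γ⁻ ∈ (0,1)` satisfies `γ⁻ ln(e/γ⁻) < 1 - r⁻`, then, with `M(t) = ⌊γ⁻ t⌋` and
`N(t) = ⌊3t⌋ + 1`,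
`e^{-t} ∑_{i≥1} (tⁱ/i!) R_i((1-m)L) - e^{-t} ∑_{i=M(t)}^{N(t)} (tⁱ/i!) R_i((1-m)L)
 = o(e^{-r⁻ t})` as `t → ∞`, uniformly with respect to `m ∈ (0,1)` and `L > 0`. -/
theorem middle_sum_dominates
    (J : ℝ → ℝ) (rm γ : ℝ)
    (hK1 : K1 J) (hrm : 0 < rm) (hrm1 : rm < 1)
    (hγ : 0 < γ) (hγ1 : γ < 1)
    (hγrm : γ * Real.log (Real.exp 1 / γ) < 1 - rm) :
    ∀ δ, 0 < δ → ∃ t₀ : ℝ, ∀ t, t₀ ≤ t → ∀ m ∈ Set.Ioo (0:ℝ) 1, ∀ L, 0 < L →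
      Real.exp (rm * t) *
        |Real.exp (-t) *
            (∑' n : ℕ, t ^ (n + 1) / (Nat.factorial (n + 1) : ℝ) * tailR J n ((1 - m) * L)) -
          Real.exp (-t) *
            (∑ i ∈ Finset.Icc ⌊γ * t⌋₊ (⌊3 * t⌋₊ + 1),
              t ^ i / (Nat.factorial i : ℝ) * tailR J (i - 1) ((1 - m) * L))| ≤ δ := by
  intro δ hδ
  have hE := Ebound_tendsto hrm1 hγ hγ1 hγrm
  have hev : ∀ᶠ t : ℝ in atTop,
      Real.exp ((rm-1)*t) *
        (γ*t * Real.exp (γ*t * Real.log (Real.exp 1 * t / (γ*t-1))) +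
         (3/2) * Real.exp (3*t*(1-Real.log 3))) ≤ δ ∧ 2 ≤ γ*t ∧ 1 ≤ t := by
    refine (hE.eventually_le_const hδ)  |>.and (Filter.Eventually.and ?_ (eventually_ge_atTop 1))
    have : Tendsto (fun t : ℝ => γ * t) atTop atTop := tendsto_id.const_mul_atTop hγ
    exact this.eventually_ge_atTop 2
  rw [Filter.eventually_atTop] at hev
  obtain ⟨t₀, ht₀⟩ := hev
  refine ⟨t₀, fun t ht m hm L hL => ?_⟩
  obtain ⟨hEt, hγt2, ht1⟩ := ht₀ t ht
  have ht0 : (0:ℝ) < t := by linarith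
  set Lm : ℝ := (1-m)*L with hLm
  set M : ℕ := ⌊γ*t⌋₊ with hMdef
  set Nc : ℕ := ⌊3*t⌋₊ with hNcdef
  have hM2 : 2 ≤ M := Nat.le_floor (by exact_mod_cast hγt2)
  have hM1 : 1 ≤ M := le_trans (by norm_num) hM2
  have hMle : (M:ℝ) ≤ γ*t := Nat.floor_le (by positivity)
  have hMgt : γ*t - 1 < (M:ℝ) := Nat.sub_one_lt_floor _
  have hγt1 : (1:ℝ) ≤ γ*t - 1 := by linarith
  have hMt : (M:ℝ) ≤ t := by nlinarith
  have hNc3 : 3*t < (Nc:ℝ)+1 := Nat.lt_floor_add_one _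
  have hMNc : M ≤ Nc := Nat.floor_mono (by nlinarith)
  set a : ℕ → ℝ := fun n => t^(n+1)/(Nat.factorial (n+1) : ℝ) * tailR J n Lm with ha_def
  set b : ℕ → ℝ := fun n => t^(n+1)/(Nat.factorial (n+1) : ℝ) with hb_def
  have hb_nonneg : ∀ n, 0 ≤ b n := fun n => by positivity
  have ha_nonneg : ∀ n, 0 ≤ a n := fun n =>
    mul_nonneg (by positivity) (tailR_nonneg hK1.1 n Lm)
  have ha_le_b : ∀ n, a n ≤ b n := by
    intro n
    have h1 := tailR_le_one hK1 n Lm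
    calc a n ≤ b n * 1 := mul_le_mul_of_nonneg_left h1 (hb_nonneg n)
      _ = b n := mul_one _
  have hb_sum : Summable b := (summable_nat_add_iff 1).mpr (Real.summable_pow_div_factorial t)
  have ha_sum : Summable a := Summable.of_nonneg_of_le ha_nonneg ha_le_b hb_sum
  -- reindex the middle sum
  have hreindex : ∑ i ∈ Finset.Icc M (Nc+1), t^i/(Nat.factorial i : ℝ) * tailR J (i-1) Lm
      = ∑ n ∈ Finset.Icc (M-1) Nc, a n := by
    have hmap : Finset.Icc M (Nc+1) = (Finset.Icc (M-1) Nc).map (addRightEmbedding 1) := by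
      rw [Finset.map_add_right_Icc, Nat.sub_add_cancel hM1]
    rw [hmap, Finset.sum_map]
    refine Finset.sum_congr rfl fun n _ => ?_
    simp [addRightEmbedding, ha_def]
  -- split the whole series
  have hsplit : ∑' n, a n = ∑ n ∈ Finset.range (Nc+1), a n + ∑' k, a (k + (Nc+1)) :=
    (Summable.sum_add_tsum_nat_add (Nc+1) ha_sum).symm
  have hsplit2 : ∑ n ∈ Finset.range (Nc+1), a n
      = ∑ n ∈ Finset.range (M-1), a n + ∑ n ∈ Finset.Icc (M-1) Nc, a n := by
    rw [Finset.range_eq_Ico, ← Finset.Ico_add_one_right_eq_Icc]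
    simpa only [Finset.range_eq_Ico] using
      (Finset.sum_Ico_consecutive a (Nat.zero_le (M-1)) (show M-1 ≤ Nc+1 by omega)).symm
  have hdiff_eq : ∑' n, a n - ∑ n ∈ Finset.Icc (M-1) Nc, a n
      = ∑ n ∈ Finset.range (M-1), a n + ∑' k, a (k + (Nc+1)) := by
    rw [hsplit, hsplit2]; ring
  -- bound the left part
  have hA : ∑ n ∈ Finset.range (M-1), a n
      ≤ γ*t * Real.exp (γ*t * Real.log (Real.exp 1 * t / (γ*t-1))) := by
    have hMfact : t^M/(Nat.factorial M : ℝ)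
        ≤ Real.exp (γ*t * Real.log (Real.exp 1 * t / (γ*t-1))) := by
      have hB1 : (1:ℝ) ≤ Real.exp 1 * t / (γ*t-1) := by
        rw [le_div_iff₀ (by linarith)]
        nlinarith [Real.one_le_exp (by norm_num : (0:ℝ) ≤ 1)]
      have hlogB : 0 ≤ Real.log (Real.exp 1 * t / (γ*t-1)) := Real.log_nonneg hB1
      calc t^M/(Nat.factorial M : ℝ) ≤ (Real.exp 1 * t / M)^M :=
            pow_div_fact_le_exp_pow ht0.le hM1
        _ ≤ (Real.exp 1 * t / (γ*t-1))^M := by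
            apply pow_le_pow_left₀ (by positivity)
            apply div_le_div_of_nonneg_left (by positivity) (by linarith) hMgt.le
        _ = Real.exp ((M:ℝ) * Real.log (Real.exp 1 * t / (γ*t-1))) := by
            rw [Real.exp_nat_mul, Real.exp_log (by positivity)]
        _ ≤ Real.exp (γ*t * Real.log (Real.exp 1 * t / (γ*t-1))) := by
            exact Real.exp_le_exp.mpr (mul_le_mul_of_nonneg_right hMle hlogB)
    calc ∑ n ∈ Finset.range (M-1), a n
        ≤ ∑ n ∈ Finset.range (M-1), t^M/(Nat.factorial M : ℝ) := by
          refine Finset.sum_le_sum fun n hn => ?_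
          refine (ha_le_b n).trans (pow_div_fact_mono M (n+1) ?_ hMt)
          have := Finset.mem_range.mp hn; omega
      _ = (M-1 : ℕ) * (t^M/(Nat.factorial M : ℝ)) := by
          rw [Finset.sum_const, Finset.card_range, nsmul_eq_mul]
      _ ≤ γ*t * (t^M/(Nat.factorial M : ℝ)) := by
          apply mul_le_mul_of_nonneg_right _ (by positivity)
          calc ((M-1 : ℕ) : ℝ) ≤ (M:ℝ) := by exact_mod_cast Nat.sub_le M 1
            _ ≤ γ*t := hMle
      _ ≤ γ*t * Real.exp (γ*t * Real.log (Real.exp 1 * t / (γ*t-1))) := by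
          apply mul_le_mul_of_nonneg_left hMfact (by positivity)
  -- bound the right tail
  have hlog3 : 1 < Real.log 3 := by
    rw [Real.lt_log_iff_exp_lt (by norm_num)]
    exact lt_trans Real.exp_one_lt_d9 (by norm_num)
  have hB : ∑' k, a (k + (Nc+1)) ≤ (3/2) * Real.exp (3*t*(1-Real.log 3)) := by
    have h3N : 3*t ≤ ((Nc+2 : ℕ) : ℝ) := by push_cast; linarith
    have hpt : ∀ k, a (k + (Nc+1))
        ≤ t^(Nc+2)/(Nat.factorial (Nc+2) : ℝ) * (1/3)^k := by
      intro k
      refine (ha_le_b _).trans ?_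
      have := pow_div_fact_geom ht0.le h3N k
      calc b (k + (Nc+1)) = t^((Nc+2)+k)/(Nat.factorial ((Nc+2)+k) : ℝ) := by
            rw [hb_def]
            simp only []
            rw [show (k + (Nc+1)) + 1 = (Nc+2)+k by omega]
        _ ≤ t^(Nc+2)/(Nat.factorial (Nc+2) : ℝ) * (1/3)^k := this
    have hsum_geom : Summable (fun k : ℕ => t^(Nc+2)/(Nat.factorial (Nc+2) : ℝ) * (1/3)^k) :=
      (summable_geometric_of_lt_one (by norm_num) (by norm_num)).mul_left _
    have hsum_a : Summable (fun k => a (k + (Nc+1))) := (summable_nat_add_iff (Nc+1)).mpr ha_sum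
    calc ∑' k, a (k + (Nc+1)) ≤ ∑' k, t^(Nc+2)/(Nat.factorial (Nc+2) : ℝ) * (1/3)^k :=
          hsum_a.tsum_le_tsum hpt hsum_geom
      _ = t^(Nc+2)/(Nat.factorial (Nc+2) : ℝ) * (3/2) := by
          rw [tsum_mul_left, tsum_geometric_of_lt_one (by norm_num) (by norm_num)]
          norm_num
      _ ≤ (3/2) * Real.exp (3*t*(1-Real.log 3)) := by
          rw [mul_comm]
          apply mul_le_mul_of_nonneg_left _ (by norm_num)
          have hN1 : 1 ≤ Nc + 2 := by omega
          have hNpos : (0:ℝ) < ((Nc+2 : ℕ) : ℝ) := by positivity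
          calc t^(Nc+2)/(Nat.factorial (Nc+2) : ℝ)
              ≤ (Real.exp 1 * t / ((Nc+2 : ℕ) : ℝ))^(Nc+2) :=
                pow_div_fact_le_exp_pow ht0.le hN1
            _ ≤ (Real.exp 1 / 3)^(Nc+2) := by
                apply pow_le_pow_left₀ (by positivity)
                rw [div_le_div_iff₀ hNpos (by norm_num)]
                nlinarith [Real.exp_pos 1]
            _ = Real.exp (((Nc+2 : ℕ) : ℝ) * Real.log (Real.exp 1 / 3)) := by
                rw [Real.exp_nat_mul, Real.exp_log (by positivity)]
            _ ≤ Real.exp (3*t*(1-Real.log 3)) := by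
                apply Real.exp_le_exp.mpr
                have hlogval : Real.log (Real.exp 1 / 3) = 1 - Real.log 3 := by
                  rw [Real.log_div (Real.exp_ne_zero 1) (by norm_num), Real.log_exp]
                rw [hlogval]
                exact mul_le_mul_of_nonpos_right h3N (by linarith)
  -- assemble
  rw [hreindex, ← mul_sub, abs_mul, abs_of_pos (Real.exp_pos _), hdiff_eq]
  have hdnn : 0 ≤ ∑ n ∈ Finset.range (M-1), a n + ∑' k, a (k + (Nc+1)) :=
    add_nonneg (Finset.sum_nonneg fun n _ => ha_nonneg n) (tsum_nonneg fun k => ha_nonneg _)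
  rw [abs_of_nonneg hdnn]
  have hexp : Real.exp (rm*t) * (Real.exp (-t) *
      (∑ n ∈ Finset.range (M-1), a n + ∑' k, a (k + (Nc+1))))
      = Real.exp ((rm-1)*t) * (∑ n ∈ Finset.range (M-1), a n + ∑' k, a (k + (Nc+1))) := by
    rw [← mul_assoc, ← Real.exp_add]
    rw [show rm*t + -t = (rm-1)*t by ring]
  rw [hexp]
  calc Real.exp ((rm-1)*t) * (∑ n ∈ Finset.range (M-1), a n + ∑' k, a (k + (Nc+1)))
      ≤ Real.exp ((rm-1)*t) *
        (γ*t * Real.exp (γ*t * Real.log (Real.exp 1 * t / (γ*t-1))) +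
         (3/2) * Real.exp (3*t*(1-Real.log 3))) := by
        apply mul_le_mul_of_nonneg_left (add_le_add hA hB) (Real.exp_pos _).le
    _ ≤ δ := hEt
end
end
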